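/- arXiv:1809.01674 — 9 statements merged into one kernel-verified Lean document; each statement's English description precedes it below -/
import Mathlib

section
/- If W is an n×n real matrix with ρ(|W|) < 1 (spectral radius of the entrywise absolute value less than 1), then −I + W is totally Hurwitz, i.e., every principal submatrix of −I + W is a Hurwitz matrix (all eigenvalues have negative real part). -/
open Matrix
open scoped ENNReal

noncomputable def specRad {n : Type*} [Fintype n] [DecidableEq n] (A : Matrix n n ℝ) : ℝ :=
  sSup {r : ℝ | ∃ μ : ℂ, Module.End.HasEigenvalue
    (Matrix.toLin' (A.map (fun x => (x : ℂ)))) μ ∧ r = ‖μ‖}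

def IsHurwitz {n : Type*} [Fintype n] [DecidableEq n] (A : Matrix n n ℝ) : Prop :=
  ∀ μ : ℂ, Module.End.HasEigenvalue (Matrix.toLin' (A.map (fun x => (x : ℂ)))) μ → μ.re < 0

def TotallyHurwitz {n : Type*} [Fintype n] [DecidableEq n] (A : Matrix n n ℝ) : Prop :=
  ∀ S : Finset n,
    IsHurwitz (A.submatrix (fun i : {x // x ∈ S} => (i : n)) (fun i : {x // x ∈ S} => (i : n)))

def IsPMatrix {n : Type*} [Fintype n] [DecidableEq n] (A : Matrix n n ℝ) : Prop :=
  ∀ S : Finset n,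
    0 < (A.submatrix (fun i : {x // x ∈ S} => (i : n)) (fun i : {x // x ∈ S} => (i : n))).det

noncomputable def opNorm {m n : Type*} [Fintype m] [Fintype n] [DecidableEq n]
    (A : Matrix m n ℝ) : ℝ :=
  ‖LinearMap.toContinuousLinearMap (Matrix.toEuclideanLin A)‖

def TotallyLStable {n : Type*} [Fintype n] [DecidableEq n] (W : Matrix n n ℝ) : Prop :=
  ∃ P : Matrix n n ℝ, P.PosDef ∧ ∀ σ : n → ℝ, (∀ i, σ i = 0 ∨ σ i = 1) →
    (-((-1 + Wᵀ * Matrix.diagonal σ) * P + P * (-1 + Matrix.diagonal σ * W))).PosDef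

/-- componentwise positive part -/
def posv {n : Type*} (y : n → ℝ) : n → ℝ := fun i => max (y i) 0

/-- componentwise clamp to [0, m i], allowing `m i = ∞` -/
noncomputable def clamp {n : Type*} (m : n → ℝ≥0∞) (y : n → ℝ) : n → ℝ :=
  fun i => (min (ENNReal.ofReal (y i)) (m i)).toReal

section Aux
open Module.End Filter Topology
attribute [local instance] Matrix.linftyOpNormedAddCommGroup Matrix.linftyOpNormedRing
  Matrix.linftyOpNormedAlgebra

lemma pow_entries_nonneg {n : ℕ} (A : Matrix (Fin n) (Fin n) ℝ) (hA : ∀ i j, 0 ≤ A i j) :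
    ∀ k, ∀ i j, 0 ≤ (A ^ k) i j := by
  intro k
  induction k with
  | zero => intro i j; by_cases h : i = j <;> simp [pow_zero, Matrix.one_apply, h]
  | succ k ih =>
    intro i j
    rw [pow_succ, Matrix.mul_apply]
    exact Finset.sum_nonneg fun l _ => mul_nonneg (ih i l) (hA l j)

lemma key {n : ℕ} (A : Matrix (Fin n) (Fin n) ℝ) (hA : ∀ i j, 0 ≤ A i j)
    (hsr : spectralRadius ℂ (A.map (fun x => (x : ℂ))) < 1)
    (t : ℝ) (ht : 0 ≤ t) (x : Fin n → ℝ) (hx : ∀ i, 0 ≤ x i)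
    (i0 : Fin n) (hx0 : 0 < x i0)
    (hle : ∀ i, t * x i ≤ A.mulVec x i) : t < 1 := by
  by_contra hc
  push_neg at hc  -- hc : 1 ≤ t
  -- iterate
  have hiter : ∀ k : ℕ, ∀ i, t ^ k * x i ≤ (A ^ k).mulVec x i := by
    intro k
    induction k with
    | zero =>
      intro i
      simp only [pow_zero, Matrix.one_mulVec, one_mul]
      exact le_rfl
    | succ k ih =>
      intro i
      have h1 : t ^ (k + 1) * x i = t * (t ^ k * x i) := by ring
      have h2 : t * (t ^ k * x i) ≤ t * ((A ^ k).mulVec x i) :=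
        mul_le_mul_of_nonneg_left (ih i) ht
      have h3 : t * ((A ^ k).mulVec x i) = (A ^ k).mulVec (t • x) i := by
        simp [Matrix.mulVec_smul]
      have h4 : (A ^ k).mulVec (t • x) i ≤ (A ^ k).mulVec (A.mulVec x) i := by
        rw [Matrix.mulVec, Matrix.mulVec, dotProduct, dotProduct]
        refine Finset.sum_le_sum fun j _ => ?_
        refine mul_le_mul_of_nonneg_left ?_ (pow_entries_nonneg A hA k i j)
        simpa using hle j
      have h5 : (A ^ k).mulVec (A.mulVec x) i = (A ^ (k + 1)).mulVec x i := by
        rw [Matrix.mulVec_mulVec, ← pow_succ]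
      linarith
  -- complexified matrix
  set B := A.map (fun x => (x : ℂ)) with hBdef
  have hBpow : ∀ k : ℕ, B ^ k = (A ^ k).map (fun x => (x : ℂ)) := by
    intro k
    have h0 : B = Complex.ofRealHom.mapMatrix A := rfl
    rw [h0, ← map_pow]
    rfl
  set xc : Fin n → ℂ := fun i => (x i : ℂ) with hxc
  have hbound : ∀ k : ℕ, (A ^ k).mulVec x i0 ≤ ‖B ^ k‖ * ‖xc‖ := by
    intro k
    have hmv : ((B ^ k).mulVec xc) i0 = (((A ^ k).mulVec x i0 : ℝ) : ℂ) := by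
      rw [hBpow k]
      simp [Matrix.mulVec, dotProduct, Matrix.map_apply, hxc]
    calc (A ^ k).mulVec x i0 ≤ ‖((A ^ k).mulVec x i0 : ℝ)‖ := le_abs_self _
      _ = ‖((B ^ k).mulVec xc) i0‖ := by rw [hmv]; simp
      _ ≤ ‖(B ^ k).mulVec xc‖ := norm_le_pi_norm _ i0
      _ ≤ ‖B ^ k‖ * ‖xc‖ := Matrix.linfty_opNorm_mulVec _ _
  -- Gelfand: pick r with sr < r < 1
  obtain ⟨r, hr1, hr2⟩ := ENNReal.lt_iff_exists_nnreal_btwn.mp hsr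
  have hr2' : (r : ℝ) < 1 := by exact_mod_cast hr2
  have hgel := spectrum.pow_nnnorm_pow_one_div_tendsto_nhds_spectralRadius B
  have hev1 : ∀ᶠ k : ℕ in atTop, (‖B ^ k‖₊ : ENNReal) ^ (1 / (k : ℝ)) < (r : ENNReal) :=
    hgel.eventually_lt_const hr1
  have hev2 : ∀ᶠ k : ℕ in atTop, ‖B ^ k‖ ≤ (r : ℝ) ^ k := by
    filter_upwards [hev1, eventually_ge_atTop 1] with k hk hk1
    have hkpos : (0 : ℝ) < (k : ℝ) := by exact_mod_cast hk1
    have h2 : ((‖B ^ k‖₊ : ENNReal) ^ (1 / (k : ℝ))) ^ (k : ℝ) ≤ (r : ENNReal) ^ (k : ℝ) :=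
      ENNReal.rpow_le_rpow hk.le hkpos.le
    rw [← ENNReal.rpow_mul, one_div, inv_mul_cancel₀ hkpos.ne', ENNReal.rpow_one,
      ENNReal.rpow_natCast, ← ENNReal.coe_pow, ENNReal.coe_le_coe] at h2
    have h3 : ‖B ^ k‖₊ ≤ r ^ k := h2
    calc ‖B ^ k‖ = ((‖B ^ k‖₊ : ℝ)) := rfl
      _ ≤ ((r ^ k : NNReal) : ℝ) := by exact_mod_cast h3
      _ = (r : ℝ) ^ k := by push_cast; ring
  have hev3 : ∀ᶠ k : ℕ in atTop, (r : ℝ) ^ k * ‖xc‖ < x i0 := by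
    have : Tendsto (fun k : ℕ => (r : ℝ) ^ k * ‖xc‖) atTop (nhds (0 * ‖xc‖)) :=
      (tendsto_pow_atTop_nhds_zero_of_lt_one r.2 hr2').mul_const _
    rw [zero_mul] at this
    exact this.eventually_lt_const hx0
  obtain ⟨k, hk2, hk3⟩ := (hev2.and hev3).exists
  have htk : x i0 ≤ t ^ k * x i0 := by
    nlinarith [one_le_pow₀ hc (n := k), hx0]
  have : x i0 ≤ ‖B ^ k‖ * ‖xc‖ := (htk.trans (hiter k i0)).trans (hbound k)
  have : x i0 ≤ (r : ℝ) ^ k * ‖xc‖ :=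
    this.trans (mul_le_mul_of_nonneg_right hk2 (norm_nonneg _))
  linarith

lemma eig_iff_spec {n : ℕ} (M : Matrix (Fin n) (Fin n) ℂ) (μ : ℂ) :
    HasEigenvalue (Matrix.toLin' M) μ ↔ μ ∈ spectrum ℂ M := by
  have h1 : Matrix.toLin' M = Matrix.toLinAlgEquiv' M := by
    ext v
    simp [Matrix.toLin'_apply, Matrix.toLinAlgEquiv'_apply]
  rw [h1, hasEigenvalue_iff_mem_spectrum, AlgEquiv.spectrum_eq]

lemma sr_lt_one {n : ℕ} [Nonempty (Fin n)] (A : Matrix (Fin n) (Fin n) ℝ)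
    (h : specRad A < 1) : spectralRadius ℂ (A.map (fun x => (x : ℂ))) < 1 := by
  set B := A.map (fun x => (x : ℂ)) with hB
  set Sset := {r : ℝ | ∃ μ : ℂ, HasEigenvalue (Matrix.toLin' B) μ ∧ r = ‖μ‖}
  have hbdd : BddAbove Sset := by
    refine ⟨‖B‖, ?_⟩
    rintro r ⟨μ, hμ, rfl⟩
    rw [eig_iff_spec] at hμ
    simpa using spectrum.norm_le_norm_of_mem hμ
  have hz : ∀ z ∈ spectrum ℂ B, ‖z‖₊ < 1 := by
    intro z hz
    have hmem : ‖z‖ ∈ Sset := ⟨z, (eig_iff_spec B z).mpr hz, rfl⟩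
    have := (le_csSup hbdd hmem).trans_lt h
    rw [← NNReal.coe_lt_coe]
    simpa using this
  have := spectrum.spectralRadius_lt_of_forall_lt B hz
  simpa using this

theorem stmt0 {n : ℕ} (W : Matrix (Fin n) (Fin n) ℝ)
    (h : specRad (W.map (fun x => |x|)) < 1) :
    TotallyHurwitz (-1 + W) := by
  intro S μ hμ
  obtain ⟨v, hv⟩ := hμ.exists_hasEigenvector
  have hv2 := hv.apply_eq_smul
  rw [Matrix.toLin'_apply] at hv2
  set f : {x // x ∈ S} → Fin n := fun i => (i : Fin n) with hf
  set Nc : Matrix {x // x ∈ S} {x // x ∈ S} ℂ := (W.submatrix f f).map (fun x => (x : ℂ))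
    with hNc
  have hM : (((-1 + W).submatrix f f).map (fun x => (x : ℂ))) = -1 + Nc := by
    ext i j
    by_cases hij : i = j
    · subst hij
      simp [hNc, Matrix.map_apply, Matrix.submatrix_apply, Matrix.add_apply, Matrix.one_apply]
    · have : f i ≠ f j := fun hc => hij (Subtype.ext hc)
      simp [hNc, Matrix.map_apply, Matrix.submatrix_apply, Matrix.add_apply, Matrix.one_apply,
        hij, this]
  rw [hM] at hv2
  have hNv : Nc.mulVec v = (μ + 1) • v := by
    funext i
    have := congrFun hv2 i
    rw [Matrix.add_mulVec, Matrix.neg_mulVec, Matrix.one_mulVec] at this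
    simp only [Pi.add_apply, Pi.neg_apply, Pi.smul_apply, smul_eq_mul] at this ⊢
    ring_nf
    ring_nf at this
    linear_combination this
  set lam := μ + 1 with hlam
  set A := W.map (fun x => |x|) with hA
  set x : Fin n → ℝ := fun k => if hk : k ∈ S then ‖v ⟨k, hk⟩‖ else 0 with hx
  have hxnn : ∀ i, 0 ≤ x i := by
    intro i
    by_cases hi : i ∈ S <;> simp [hx, hi, AbsoluteValue.nonneg]
  obtain ⟨j0, hj0⟩ := Function.ne_iff.mp hv.2
  have hx0 : 0 < x (j0 : Fin n) := by
    have : x (j0 : Fin n) = ‖v j0‖ := by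
      simp only [hx, dif_pos j0.2]
    rw [this]
    exact norm_pos_iff.mpr (by simpa using hj0)
  have hle : ∀ i, ‖lam‖ * x i ≤ A.mulVec x i := by
    intro k
    by_cases hk : k ∈ S
    · have h1 : ‖lam‖ * x k = ‖Nc.mulVec v ⟨k, hk⟩‖ := by
        rw [hNv]
        simp [hx, dif_pos hk, norm_mul]
      have h2 : ‖Nc.mulVec v ⟨k, hk⟩‖
          ≤ ∑ j : {x // x ∈ S}, A k (j : Fin n) * x (j : Fin n) := by
        rw [Matrix.mulVec, dotProduct]
        refine (norm_sum_le _ _).trans ?_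
        refine Finset.sum_le_sum fun j _ => ?_
        rw [norm_mul]
        simp only [hNc, Matrix.map_apply, Matrix.submatrix_apply, Complex.norm_real]
        have : x (j : Fin n) = ‖v j‖ := by
          simp only [hx, dif_pos j.2, Subtype.coe_eta]
        rw [this, hA]
        simp [Matrix.map_apply, hf]
      have h3 : ∑ j : {x // x ∈ S}, A k (j : Fin n) * x (j : Fin n) = A.mulVec x k := by
        rw [Matrix.mulVec, dotProduct]
        rw [← Finset.sum_subtype S (fun _ => Iff.rfl) (fun j => A k j * x j)]
        exact Finset.sum_subset (Finset.subset_univ S)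
          (fun j _ hj => by simp [hx, dif_neg hj])
      rw [h1]
      exact h2.trans h3.le
    · have hxk : x k = 0 := by simp [hx, dif_neg hk]
      rw [hxk, mul_zero, Matrix.mulVec, dotProduct]
      exact Finset.sum_nonneg fun j _ =>
        mul_nonneg (by simp [hA, Matrix.map_apply, abs_nonneg]) (hxnn j)
  haveI : Nonempty (Fin n) := ⟨(j0 : Fin n)⟩
  have hAnn : ∀ i j, 0 ≤ A i j := fun i j => by
    simp [hA, Matrix.map_apply, abs_nonneg]
  have ht := key A hAnn (sr_lt_one A h) ‖lam‖
    (norm_nonneg _) x hxnn (j0 : Fin n) hx0 hle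
  have h1 : lam.re < 1 := lt_of_le_of_lt (Complex.re_le_norm lam) ht
  have h2 : lam.re = μ.re + 1 := by simp [hlam]
  linarith

end Aux
end

section
/- If W is totally L-stable (there exists a single symmetric positive definite P such that (−I + WᵀΣ)P + P(−I + ΣW) ≺ 0 for all 0/1 diagonal Σ), then −I + W is totally Hurwitz, i.e., every principal submatrix of −I + W is Hurwitz. -/
open Matrix
open scoped ENNReal

theorem sum_antisymm' {N : Type*} [Fintype N] (f : N → N → ℝ) (hf : ∀ i j, f i j = - f j i) :
    ∑ i : N, ∑ j : N, f i j = 0 := by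
  have h : (∑ i : N, ∑ j : N, f i j) = -(∑ i : N, ∑ j : N, f i j) := by
    conv_lhs => rw [Finset.sum_comm]
    rw [← Finset.sum_neg_distrib]
    refine Finset.sum_congr rfl fun j _ => ?_
    rw [← Finset.sum_neg_distrib]
    exact Finset.sum_congr rfl fun i _ => hf i j
  linarith

theorem quad_map' {N : Type*} [Fintype N] (R : Matrix N N ℝ) (hR : Rᵀ = R) (v : N → ℂ) :
    star v ⬝ᵥ (R.map (fun x => (x : ℂ))) *ᵥ v =
      (((fun i => (v i).re) ⬝ᵥ R *ᵥ (fun i => (v i).re)) +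
       ((fun i => (v i).im) ⬝ᵥ R *ᵥ (fun i => (v i).im)) : ℝ) := by
  have hsym : ∀ i j, R i j = R j i := fun i j => by
    conv_lhs => rw [← hR, transpose_apply]
  apply Complex.ext
  · simp only [dotProduct, mulVec, Pi.star_apply, map_apply, Complex.ofReal_re,
      Finset.mul_sum, Complex.re_sum, Complex.mul_re, Complex.ofReal_im, RCLike.star_def,
      Complex.conj_re, Complex.conj_im]
    rw [Finset.sum_add_distrib.symm]
    apply Finset.sum_congr rfl; intro i _
    rw [Finset.sum_add_distrib.symm]
    apply Finset.sum_congr rfl; intro j _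
    simp only [Complex.mul_im, Complex.ofReal_re, Complex.ofReal_im]
    ring
  · simp only [dotProduct, mulVec, Pi.star_apply, map_apply, Complex.ofReal_re,
      Finset.mul_sum, Complex.im_sum, Complex.mul_im, Complex.mul_re, Complex.ofReal_im,
      RCLike.star_def, Complex.conj_re, Complex.conj_im]
    apply sum_antisymm'
    intro i j
    rw [hsym i j]
    ring

theorem quad_pos' {N : Type*} [Fintype N] {R : Matrix N N ℝ} (hR : R.PosDef) {v : N → ℂ}
    (hv : v ≠ 0) : ∃ r : ℝ, 0 < r ∧ star v ⬝ᵥ (R.map (fun x => (x : ℂ))) *ᵥ v = (r : ℂ) := by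
  have hsym : Rᵀ = R := by
    rw [← Matrix.conjTranspose_eq_transpose_of_trivial]
    exact hR.1
  set a : N → ℝ := fun i => (v i).re with ha
  set b : N → ℝ := fun i => (v i).im with hb
  have hstar : ∀ x : N → ℝ, star x = x := fun x => funext fun i => star_trivial _
  refine ⟨a ⬝ᵥ R *ᵥ a + b ⬝ᵥ R *ᵥ b, ?_, quad_map' R hsym v⟩
  have hna : 0 ≤ a ⬝ᵥ R *ᵥ a := by have := hR.posSemidef.dotProduct_mulVec_nonneg a; rwa [hstar] at this
  have hnb : 0 ≤ b ⬝ᵥ R *ᵥ b := by have := hR.posSemidef.dotProduct_mulVec_nonneg b; rwa [hstar] at this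
  have hab : a ≠ 0 ∨ b ≠ 0 := by
    by_contra hc
    push_neg at hc
    apply hv
    funext i
    exact Complex.ext (congrFun hc.1 i) (congrFun hc.2 i)
  rcases hab with hne | hne
  · have := hR.dotProduct_mulVec_pos hne; rw [hstar] at this; linarith
  · have := hR.dotProduct_mulVec_pos hne; rw [hstar] at this; linarith

theorem stmt2 {n : ℕ} (W : Matrix (Fin n) (Fin n) ℝ) (h : TotallyLStable W) :
    TotallyHurwitz (-1 + W) := by
  classical
  obtain ⟨P, hP, hLMI⟩ := h
  intro S μ hμ
  set σ : Fin n → ℝ := fun i => if i ∈ S then 1 else 0 with hσdef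
  have hσ01 : ∀ i, σ i = 0 ∨ σ i = 1 := fun i => by
    by_cases hi : i ∈ S <;> simp [σ, hi]
  set M : Matrix (Fin n) (Fin n) ℝ := -1 + Matrix.diagonal σ * W with hMdef
  have hMT : (-1 + Wᵀ * Matrix.diagonal σ) = Mᵀ := by
    rw [hMdef, transpose_add, transpose_neg, transpose_one, transpose_mul, diagonal_transpose]
  have hQ := hLMI σ hσ01
  rw [hMT] at hQ
  set Q : Matrix (Fin n) (Fin n) ℝ := -(Mᵀ * P + P * M) with hQdef
  have hQsym : Qᵀ = Q := by
    rw [← Matrix.conjTranspose_eq_transpose_of_trivial]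
    exact hQ.1
  -- eigenvector
  obtain ⟨u, hu⟩ := hμ.exists_hasEigenvector
  have huapp : (((-1 + W).submatrix (fun i : {x // x ∈ S} => (i : Fin n))
      (fun i : {x // x ∈ S} => (i : Fin n))).map (fun x => (x : ℂ))) *ᵥ u = μ • u := by
    have h1 := hu.apply_eq_smul
    rwa [Matrix.toLin'_apply] at h1
  have hune : u ≠ 0 := hu.2
  set v : Fin n → ℂ := fun j => if hj : j ∈ S then u ⟨j, hj⟩ else 0 with hvdef
  have hvS : ∀ (j : Fin n) (hj : j ∈ S), v j = u ⟨j, hj⟩ := fun j hj => by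
    simp [hvdef, hj]
  have hvNS : ∀ j : Fin n, j ∉ S → v j = 0 := fun j hj => by simp [hvdef, hj]
  have hvne : v ≠ 0 := by
    intro h0
    obtain ⟨i, hi⟩ := Function.ne_iff.mp hune
    apply hi
    have : v ↑i = 0 := by rw [h0]; rfl
    rw [hvS ↑i i.2] at this
    simpa using this
  -- eigen equation for the extended vector
  have hMv : (M.map (fun x => (x : ℂ))) *ᵥ v = μ • v := by
    funext j
    show ∑ k, (M.map (fun x => (x : ℂ))) j k * v k = μ * v j
    by_cases hj : j ∈ S
    · have hvanish : ∀ k ∈ Finset.univ, k ∉ S → (M.map (fun x => (x : ℂ))) j k * v k = 0 := by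
        intro k _ hk
        rw [hvNS k hk, mul_zero]
      rw [← Finset.sum_subset (Finset.subset_univ S) hvanish,
        ← Finset.sum_attach S (fun k => (M.map (fun x => (x : ℂ))) j k * v k)]
      have h1 := congrFun huapp ⟨j, hj⟩
      have h2 : ∀ k : {x // x ∈ S},
          (M.map (fun x => (x : ℂ))) j ↑k * v ↑k =
          (((-1 + W).submatrix (fun i : {x // x ∈ S} => (i : Fin n))
            (fun i : {x // x ∈ S} => (i : Fin n))).map (fun x => (x : ℂ))) ⟨j, hj⟩ k * u k := by
        intro k
        rw [hvS ↑k k.2]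
        simp [hMdef, Matrix.map_apply, Matrix.add_apply, Matrix.neg_apply,
          Matrix.diagonal_mul, σ, hj, Matrix.submatrix_apply]
      calc ∑ k ∈ S.attach, (M.map (fun x => (x : ℂ))) j ↑k * v ↑k
          = ∑ k ∈ S.attach, (((-1 + W).submatrix (fun i : {x // x ∈ S} => (i : Fin n))
              (fun i : {x // x ∈ S} => (i : Fin n))).map (fun x => (x : ℂ))) ⟨j, hj⟩ k * u k :=
            Finset.sum_congr rfl fun k _ => h2 k
        _ = μ * u ⟨j, hj⟩ := by rw [← Finset.univ_eq_attach]; exact h1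
        _ = μ * v j := by rw [hvS j hj]
    · have hσj : σ j = 0 := by simp [σ, hj]
      rw [hvNS j hj, mul_zero]
      have : ∀ k, (M.map (fun x => (x : ℂ))) j k * v k =
          -(if j = k then v k else 0) := by
        intro k
        by_cases hk : j = k
        · subst hk
          simp [hMdef, Matrix.map_apply, Matrix.add_apply, Matrix.neg_apply,
            Matrix.diagonal_mul, hσj, Matrix.one_apply]
        · simp [hMdef, Matrix.map_apply, Matrix.add_apply, Matrix.neg_apply,
            Matrix.diagonal_mul, hσj, Matrix.one_apply, hk]
      simp only [this]
      simp [Finset.sum_ite_eq, hvNS j hj]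
  -- Lyapunov quadratic form computation
  set c : ℝ → ℂ := fun x => (x : ℂ) with hc
  have hmapQ : Q.map c = -((Mᵀ.map c) * (P.map c) + (P.map c) * (M.map c)) := by
    ext i j
    simp only [hQdef, Matrix.map_apply, Matrix.neg_apply, Matrix.add_apply, Matrix.mul_apply,
      hc]
    push_cast
    ring
  have hstarM : (M.map c) *ᵥ (star v) = star ((M.map c) *ᵥ v) := by
    funext j
    simp only [mulVec, dotProduct, Pi.star_apply, map_apply, hc]
    rw [star_sum]
    apply Finset.sum_congr rfl
    intro k _
    simp [Complex.conj_ofReal, mul_comm]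
  have hTrans : (Mᵀ.map c) = (M.map c)ᵀ := by
    ext i j; simp [Matrix.map_apply]
  obtain ⟨pr, hpr, hpeq⟩ := quad_pos' hP hvne
  obtain ⟨qr, hqr, hqeq⟩ := quad_pos' hQ hvne
  have key : star v ⬝ᵥ (Q.map c) *ᵥ v =
      -((starRingEnd ℂ) μ + μ) * (star v ⬝ᵥ (P.map c) *ᵥ v) := by
    rw [hmapQ, hTrans]
    rw [neg_mulVec, add_mulVec, dotProduct_neg, dotProduct_add]
    rw [← mulVec_mulVec, ← mulVec_mulVec]
    rw [Matrix.dotProduct_mulVec (star v) ((M.map c)ᵀ) ((P.map c) *ᵥ v)]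
    rw [Matrix.vecMul_transpose]
    rw [hstarM, hMv]
    rw [mulVec_smul]
    have h1 : star (μ • v) ⬝ᵥ ((P.map c) *ᵥ v) =
        (starRingEnd ℂ) μ * (star v ⬝ᵥ (P.map c) *ᵥ v) := by
      rw [star_smul, smul_dotProduct]
      rfl
    have h2 : star v ⬝ᵥ (μ • ((P.map c) *ᵥ v)) = μ * (star v ⬝ᵥ (P.map c) *ᵥ v) := by
      rw [dotProduct_smul]
      rfl
    rw [h1, h2]
    ring
  rw [hpeq, hqeq] at key
  have hconj : -((starRingEnd ℂ) μ + μ) = ((-(2 * μ.re) : ℝ) : ℂ) := by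
    rw [add_comm ((starRingEnd ℂ) μ) μ, Complex.add_conj]
    push_cast
    ring
  rw [hconj, ← Complex.ofReal_mul] at key
  have hreal : qr = -(2 * μ.re) * pr := Complex.ofReal_inj.mp key
  nlinarith
end

section
/- A real square matrix A is a P-matrix if and only if its inverse exists and A⁻¹ is a P-matrix. -/
open Matrix
open scoped ENNReal

lemma block_det_aux {p q : Type*} [Fintype p] [Fintype q] [DecidableEq p] [DecidableEq q]
    (P : Matrix p p ℝ) (Q : Matrix p q ℝ) (R : Matrix q p ℝ) (S : Matrix q q ℝ)
    (C11 : Matrix p p ℝ) (C21 : Matrix q p ℝ)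
    (h1 : P * C11 + Q * C21 = 1) (h2 : R * C11 + S * C21 = 0) :
    (fromBlocks P Q R S).det * C11.det = S.det := by
  have hm : fromBlocks P Q R S * fromBlocks C11 0 C21 1 = fromBlocks 1 Q 0 S := by
    rw [fromBlocks_multiply]
    simp [h1, h2]
  have hd := congrArg Matrix.det hm
  rw [det_mul, det_fromBlocks_zero₁₂, det_fromBlocks_zero₂₁] at hd
  simpa using hd

lemma blocks_of_mul_eq_one {p q : Type*} [Fintype p] [Fintype q] [DecidableEq p] [DecidableEq q]
    (M N : Matrix (p ⊕ q) (p ⊕ q) ℝ) (h : M * N = 1) :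
    M.toBlocks₁₁ * N.toBlocks₁₁ + M.toBlocks₁₂ * N.toBlocks₂₁ = 1 ∧
    M.toBlocks₂₁ * N.toBlocks₁₁ + M.toBlocks₂₂ * N.toBlocks₂₁ = 0 := by
  rw [← fromBlocks_toBlocks M, ← fromBlocks_toBlocks N, fromBlocks_multiply,
    ← fromBlocks_one] at h
  obtain ⟨h1, _, h2, _⟩ := fromBlocks_inj.mp h
  exact ⟨h1, h2⟩

/-- Jacobi's identity for principal minors of the inverse. -/
lemma jacobi {n : Type*} [Fintype n] [DecidableEq n] (A : Matrix n n ℝ)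
    (h : IsUnit A.det) (S : Finset n) :
    A.det * ((A⁻¹).submatrix (fun i : {x // x ∈ S} => (i : n))
        (fun i : {x // x ∈ S} => (i : n))).det
      = (A.submatrix (fun i : {x // ¬ x ∈ S} => (i : n))
        (fun i : {x // ¬ x ∈ S} => (i : n))).det := by
  classical
  let e : {x // x ∈ S} ⊕ {x // ¬ x ∈ S} ≃ n := Equiv.sumCompl (· ∈ S)
  have hBdet : (A.submatrix e e).det = A.det := det_submatrix_equiv_self e A
  have hBu : (A.submatrix e e) * ((A⁻¹).submatrix e e) = 1 := by
    rw [← inv_submatrix_equiv A e e]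
    exact mul_nonsing_inv _ (by rw [hBdet]; exact h)
  obtain ⟨h1, h2⟩ := blocks_of_mul_eq_one _ _ hBu
  have key := block_det_aux (A.submatrix e e).toBlocks₁₁ (A.submatrix e e).toBlocks₁₂
    (A.submatrix e e).toBlocks₂₁ (A.submatrix e e).toBlocks₂₂
    ((A⁻¹).submatrix e e).toBlocks₁₁ ((A⁻¹).submatrix e e).toBlocks₂₁ h1 h2
  rw [fromBlocks_toBlocks, hBdet] at key
  have e11 : ((A⁻¹).submatrix e e).toBlocks₁₁ = (A⁻¹).submatrix
      (fun i : {x // x ∈ S} => (i : n)) (fun i : {x // x ∈ S} => (i : n)) := by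
    ext i j
    show A⁻¹ (e (Sum.inl i)) (e (Sum.inl j)) = A⁻¹ i j
    simp [e]
  have e22 : ((A.submatrix e e)).toBlocks₂₂ = A.submatrix
      (fun i : {x // ¬ x ∈ S} => (i : n)) (fun i : {x // ¬ x ∈ S} => (i : n)) := by
    ext i j
    show A (e (Sum.inr i)) (e (Sum.inr j)) = A i j
    simp [e]
  rw [e11, e22] at key
  exact key

lemma det_pos_of_isPMatrix {n : Type*} [Fintype n] [DecidableEq n] {A : Matrix n n ℝ}
    (hA : IsPMatrix A) : 0 < A.det := by
  have key := hA Finset.univ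
  have he : (fun i : {x // x ∈ (Finset.univ : Finset n)} => (i : n))
      = ⇑(Equiv.subtypeUnivEquiv (fun x => Finset.mem_univ x)) := rfl
  rw [he, det_submatrix_equiv_self] at key
  exact key

lemma isPMatrix_inv {n : Type*} [Fintype n] [DecidableEq n] {A : Matrix n n ℝ}
    (hA : IsPMatrix A) : IsPMatrix A⁻¹ := by
  intro S
  have hdet : 0 < A.det := det_pos_of_isPMatrix hA
  have hu : IsUnit A.det := isUnit_iff_ne_zero.mpr (ne_of_gt hdet)
  have hj := jacobi A hu S
  have hcompl : 0 < (A.submatrix (fun i : {x // ¬ x ∈ S} => (i : n))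
      (fun i : {x // ¬ x ∈ S} => (i : n))).det := by
    have key := hA Sᶜ
    have he : (fun i : {x // x ∈ Sᶜ} => (i : n))
        = (fun i : {x // ¬ x ∈ S} => (i : n)) ∘
          ⇑(Equiv.subtypeEquivRight (fun x => Finset.mem_compl)) := rfl
    rw [he, ← Matrix.submatrix_submatrix, det_submatrix_equiv_self] at key
    exact key
  nlinarith [hj, hdet]

theorem stmt4 {n : ℕ} (A : Matrix (Fin n) (Fin n) ℝ) :
    IsPMatrix A ↔ IsUnit A.det ∧ IsPMatrix A⁻¹ := by
  constructor
  · intro hA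
    exact ⟨isUnit_iff_ne_zero.mpr (ne_of_gt (det_pos_of_isPMatrix hA)), isPMatrix_inv hA⟩
  · rintro ⟨hu, hAi⟩
    have := isPMatrix_inv hAi
    rwa [nonsing_inv_nonsing_inv A hu] at this
end

section
/- A real n×n matrix A is a P-matrix if and only if for every nonzero x ∈ ℝⁿ there exists an index k with x_k (Ax)_k > 0 (i.e., A does not reverse the sign of any nonzero vector). -/
open Matrix
open scoped ENNReal

section Aux

variable {m : Type*} [Fintype m] [DecidableEq m]

/-- equiv splitting `m` into `sᶜ ⊕ s`. -/
def complEquiv (s : Finset m) : {x // x ∈ sᶜ} ⊕ {x // x ∈ s} ≃ m where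
  toFun := Sum.elim Subtype.val Subtype.val
  invFun x := if h : x ∈ s then Sum.inr ⟨x, h⟩ else Sum.inl ⟨x, Finset.mem_compl.2 h⟩
  left_inv := by
    rintro (⟨x, hx⟩ | ⟨x, hx⟩)
    · simp [Finset.mem_compl.1 hx]
    · simp [hx]
  right_inv := by
    intro x
    by_cases h : x ∈ s <;> simp [h]

lemma det_piecewise_one (s : Finset m) (A : Matrix m m ℝ) :
    (Matrix.of (s.piecewise (1 : Matrix m m ℝ) A)).det
      = (A.submatrix (fun i : {x // x ∈ sᶜ} => (i : m))
          (fun i : {x // x ∈ sᶜ} => (i : m))).det := by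
  rw [← Matrix.det_submatrix_equiv_self (complEquiv s)]
  have hblock : (Matrix.of (s.piecewise (1 : Matrix m m ℝ) A)).submatrix
        (complEquiv s) (complEquiv s)
      = Matrix.fromBlocks
          (A.submatrix (fun i : {x // x ∈ sᶜ} => (i : m)) (fun i : {x // x ∈ sᶜ} => (i : m)))
          (A.submatrix (fun i : {x // x ∈ sᶜ} => (i : m)) (fun i : {x // x ∈ s} => (i : m)))
          0 1 := by
    ext i j
    rcases i with i | i <;> rcases j with j | j
    · simp [complEquiv, Finset.piecewise, Finset.mem_compl.1 i.2]
    · simp [complEquiv, Finset.piecewise, Finset.mem_compl.1 i.2]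
    · have hne : (i : m) ≠ (j : m) := by
        intro hEq
        exact Finset.mem_compl.1 j.2 (hEq ▸ i.2)
      simp [complEquiv, Finset.piecewise, i.2, Matrix.one_apply, hne]
    · show (Matrix.of (s.piecewise (1 : Matrix m m ℝ) A)) (i : m) (j : m)
        = (1 : Matrix {x // x ∈ s} {x // x ∈ s} ℝ) i j
      simp only [Matrix.of_apply, Finset.piecewise, i.2, ↓reduceIte, Matrix.one_apply,
        Subtype.ext_iff]
  rw [hblock, Matrix.det_fromBlocks_zero₂₁, Matrix.det_one, mul_one]

lemma det_add_diagonal (A : Matrix m m ℝ) (d : m → ℝ) :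
    (A + Matrix.diagonal d).det
      = ∑ s : Finset m, (∏ i ∈ s, d i) *
          (A.submatrix (fun i : {x // x ∈ sᶜ} => (i : m))
            (fun i : {x // x ∈ sᶜ} => (i : m))).det := by
  have h1 : (A + Matrix.diagonal d).det
      = ∑ s : Finset m, Matrix.detRowAlternating (s.piecewise (Matrix.diagonal d) A) := by
    rw [show A + Matrix.diagonal d = Matrix.diagonal d + A from add_comm _ _]
    exact Matrix.detRowAlternating.toMultilinearMap.map_add_univ (Matrix.diagonal d) A
  rw [h1]
  refine Finset.sum_congr rfl fun s _ => ?_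
  have hpw : s.piecewise (Matrix.diagonal d) A
      = s.piecewise (fun i => d i • (s.piecewise (1 : Matrix m m ℝ) A) i)
          (s.piecewise (1 : Matrix m m ℝ) A) := by
    funext i
    by_cases hi : i ∈ s
    · simp only [Finset.piecewise, hi, ↓reduceIte]
      funext j
      by_cases hij : i = j <;> simp [Matrix.diagonal_apply, Matrix.one_apply, hij]
    · simp only [Finset.piecewise, hi, ↓reduceIte]
  rw [hpw]
  have h2 : Matrix.detRowAlternating
        (s.piecewise (fun i => d i • (s.piecewise (1 : Matrix m m ℝ) A) i)
          (s.piecewise (1 : Matrix m m ℝ) A))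
      = (∏ i ∈ s, d i) • Matrix.detRowAlternating (s.piecewise (1 : Matrix m m ℝ) A) :=
    Matrix.detRowAlternating.toMultilinearMap.map_piecewise_smul d
      (s.piecewise (1 : Matrix m m ℝ) A) s
  rw [h2, smul_eq_mul]
  congr 1
  exact det_piecewise_one s A

lemma pm_det_add_diag {A : Matrix m m ℝ} (hA : IsPMatrix A)
    {d : m → ℝ} (hd : ∀ i, 0 ≤ d i) : 0 < (A + Matrix.diagonal d).det := by
  rw [det_add_diagonal]
  refine Finset.sum_pos' (fun s _ => mul_nonneg (Finset.prod_nonneg fun i _ => hd i) (hA sᶜ).le)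
    ⟨∅, Finset.mem_univ _, ?_⟩
  simpa using (hA (∅ᶜ : Finset m))

lemma IsPMatrix.restrict {A : Matrix m m ℝ} (hA : IsPMatrix A) (S : Finset m) :
    IsPMatrix (A.submatrix (fun i : {x // x ∈ S} => (i : m))
      (fun i : {x // x ∈ S} => (i : m))) := by
  intro T
  set T' : Finset m := T.image Subtype.val with hT'
  have hf : Function.Bijective
      (fun y : {y // y ∈ T} => (⟨((y : {x // x ∈ S}) : m),
        Finset.mem_image.2 ⟨y.1, y.2, rfl⟩⟩ : {x // x ∈ T'})) := by
    constructor
    · intro a b hab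
      simp only [Subtype.mk.injEq] at hab
      exact Subtype.ext (Subtype.ext hab)
    · rintro ⟨x, hx⟩
      obtain ⟨y, hy, rfl⟩ := Finset.mem_image.1 hx
      exact ⟨⟨y, hy⟩, rfl⟩
  set e := Equiv.ofBijective _ hf
  have key := hA T'
  rw [← Matrix.det_submatrix_equiv_self e] at key
  convert key using 2
  ext i j
  rfl

lemma det_pos_of_nonrev {A : Matrix m m ℝ}
    (h : ∀ x : m → ℝ, x ≠ 0 → ∃ k, 0 < x k * (A.mulVec x) k) : 0 < A.det := by
  set f : ℝ → ℝ := fun t => ((1 - t) • (1 : Matrix m m ℝ) + t • A).det with hfdef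
  have hf : Continuous f := by
    apply Continuous.matrix_det
    fun_prop
  have hne : ∀ t ∈ Set.Icc (0 : ℝ) 1, f t ≠ 0 := by
    intro t ht h0
    obtain ⟨v, hv, hveq⟩ := Matrix.exists_mulVec_eq_zero_iff.2 h0
    obtain ⟨k, hk⟩ := h v hv
    have hcomp : (1 - t) * v k + t * (A.mulVec v) k = 0 := by
      have := congrFun hveq k
      simpa [Matrix.add_mulVec, Matrix.smul_mulVec, Matrix.one_mulVec] using this
    have hvk : 0 < v k * v k := by
      rcases mul_pos_iff.1 hk with ⟨h1, _⟩ | ⟨h1, _⟩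
      · exact mul_pos h1 h1
      · exact mul_pos_of_neg_of_neg h1 h1
    have hcomp2 : (1 - t) * (v k * v k) + t * (v k * (A.mulVec v) k) = 0 := by
      linear_combination v k * hcomp
    rcases eq_or_lt_of_le ht.1 with rfl | htpos
    · simp at hcomp2
      nlinarith [hvk, hcomp2]
    · have h1 : 0 < t * (v k * (A.mulVec v) k) := mul_pos htpos hk
      have h2 : 0 ≤ (1 - t) * (v k * v k) := mul_nonneg (by linarith [ht.2]) hvk.le
      linarith
  have h0 : f 0 = 1 := by simp [hfdef]
  have h1 : f 1 = A.det := by simp [hfdef]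
  by_contra hcon
  push_neg at hcon
  have : (0 : ℝ) ∈ Set.Icc (f 1) (f 0) := by
    rw [h0, h1]; exact ⟨hcon, zero_le_one⟩
  obtain ⟨t, ht, hft⟩ := intermediate_value_Icc' zero_le_one hf.continuousOn this
  exact hne t ht hft

end Aux

theorem stmt5 {n : ℕ} (A : Matrix (Fin n) (Fin n) ℝ) :
    IsPMatrix A ↔ ∀ x : Fin n → ℝ, x ≠ 0 → ∃ k, 0 < x k * (A.mulVec x) k := by
  constructor
  · intro hA x hx
    by_contra hcon
    push_neg at hcon
    set S : Finset (Fin n) := Finset.univ.filter (fun i => x i ≠ 0) with hS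
    set B := A.submatrix (fun i : {x // x ∈ S} => (i : Fin n))
      (fun i : {x // x ∈ S} => (i : Fin n)) with hB
    set z : {i // i ∈ S} → ℝ := fun i => x i with hz
    have hmemS : ∀ i : Fin n, i ∈ S ↔ x i ≠ 0 := by
      intro i; simp [hS]
    have hBz : ∀ i : {i // i ∈ S}, (B.mulVec z) i = (A.mulVec x) i := by
      intro i
      have h2 : (A.mulVec x) (i : Fin n) = ∑ j ∈ S, A i j * x j := by
        rw [Matrix.mulVec, dotProduct]
        refine (Finset.sum_subset (Finset.subset_univ S) fun j _ hj => ?_).symm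
        have : x j = 0 := by by_contra hxj; exact hj ((hmemS j).2 hxj)
        simp [this]
      rw [h2, Matrix.mulVec, dotProduct, ← Finset.sum_coe_sort S (fun j => A i j * x j)]
      rfl
    set d : {i // i ∈ S} → ℝ := fun i => -((A.mulVec x) i) / x i with hd
    have hxi : ∀ i : {i // i ∈ S}, x (i : Fin n) ≠ 0 := fun i => (hmemS i).1 i.2
    have hdnn : ∀ i, 0 ≤ d i := by
      intro i
      have h1 : x (i : Fin n) * (A.mulVec x) (i : Fin n) ≤ 0 := hcon i
      rcases (hxi i).lt_or_gt with hlt | hgt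
      · exact div_nonneg_iff.2 (Or.inr ⟨by nlinarith, hlt.le⟩)
      · exact div_nonneg (by nlinarith) hgt.le
    have hsing : (B + Matrix.diagonal d).mulVec z = 0 := by
      funext i
      have hdiag : (Matrix.diagonal d).mulVec z i = d i * z i := by
        simp [Matrix.mulVec, dotProduct, Matrix.diagonal_apply, Finset.sum_ite_eq]
      rw [Matrix.add_mulVec]
      simp only [Pi.add_apply, hdiag, hBz i]
      rw [hd]
      simp only [hz]
      have hcan : -(A.mulVec x) ↑i / x ↑i * x ↑i = -(A.mulVec x) ↑i :=
        div_mul_cancel₀ _ (hxi i)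
      simp only [hcan]
      simp
    have hzne : z ≠ 0 := by
      obtain ⟨j, hj⟩ := Function.ne_iff.1 hx
      have hjS : j ∈ S := (hmemS j).2 hj
      intro hzz
      exact hj (by simpa using congrFun hzz ⟨j, hjS⟩)
    have hdet0 : (B + Matrix.diagonal d).det = 0 :=
      Matrix.exists_mulVec_eq_zero_iff.1 ⟨z, hzne, hsing⟩
    have hdetpos := pm_det_add_diag (hA.restrict S) hdnn
    rw [hdet0] at hdetpos
    exact lt_irrefl 0 hdetpos
  · intro h S
    apply det_pos_of_nonrev
    intro y hy
    set x : Fin n → ℝ := fun i => if hi : i ∈ S then y ⟨i, hi⟩ else 0 with hxdef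
    have hxval : ∀ i : {x // x ∈ S}, x (i : Fin n) = y i := by
      intro i
      simp only [hxdef]
      rw [dif_pos i.2]
    have hx : x ≠ 0 := by
      obtain ⟨j, hj⟩ := Function.ne_iff.1 hy
      intro hxx
      apply hj
      rw [← hxval j]
      simpa using congrFun hxx j
    obtain ⟨k, hk⟩ := h x hx
    have hxk : x k ≠ 0 := by
      intro h0; rw [h0] at hk; simpa using hk
    have hkS : k ∈ S := by
      by_contra hkS
      exact hxk (by simp [hxdef, hkS])
    refine ⟨⟨k, hkS⟩, ?_⟩
    have hAx : (A.mulVec x) k = ((A.submatrix (fun i : {x // x ∈ S} => (i : Fin n))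
        (fun i : {x // x ∈ S} => (i : Fin n))).mulVec y) ⟨k, hkS⟩ := by
      rw [Matrix.mulVec, dotProduct]
      have h2 : ∑ j, A k j * x j = ∑ j ∈ S, A k j * x j := by
        refine (Finset.sum_subset (Finset.subset_univ S) fun j _ hj => ?_).symm
        simp [hxdef, hj]
      rw [h2, ← Finset.sum_coe_sort S (fun j => A k j * x j)]
      rw [Matrix.mulVec, dotProduct]
      refine Finset.sum_congr rfl fun j _ => ?_
      rw [hxval j]
      rfl
    rw [← hAx, ← hxval ⟨k, hkS⟩]
    exact hk
end

section
/- If A is a P-matrix partitioned in 2×2 block form with nonsingular bottom-right block A₂₂, then its principal pivot transform π(A) = [[A₁₁ − A₁₂A₂₂⁻¹A₂₁, A₁₂A₂₂⁻¹], [−A₂₂⁻¹A₂₁, A₂₂⁻¹]] is also a P-matrix. -/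
open Matrix
open scoped ENNReal

/-- row-mix of `X` with the identity: rows in `S` come from `X`, others from `1`. -/
def mixM {n : Type*} [Fintype n] [DecidableEq n] (S : Finset n) (X : Matrix n n ℝ) :
    Matrix n n ℝ :=
  Matrix.of fun i j => if i ∈ S then X i j else (1 : Matrix n n ℝ) i j

lemma mixM_mul_apply {n : Type*} [Fintype n] [DecidableEq n] (S : Finset n)
    (X Y : Matrix n n ℝ) (i : n) (j : n) :
    (mixM S X * Y) i j = if i ∈ S then (X * Y) i j else Y i j := by
  by_cases h : i ∈ S
  · rw [if_pos h, Matrix.mul_apply, Matrix.mul_apply]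
    exact Finset.sum_congr rfl fun k _ => by simp [mixM, h]
  · rw [if_neg h, Matrix.mul_apply]
    have : ∀ k, mixM S X i k = (1 : Matrix n n ℝ) i k := fun k => by simp [mixM, h]
    calc ∑ k, mixM S X i k * Y k j = ∑ k, (1 : Matrix n n ℝ) i k * Y k j :=
          Finset.sum_congr rfl fun k _ => by rw [this]
      _ = ((1 : Matrix n n ℝ) * Y) i j := (Matrix.mul_apply).symm
      _ = Y i j := by rw [Matrix.one_mul]

lemma det_mixM {n : Type*} [Fintype n] [DecidableEq n] (S : Finset n) (X : Matrix n n ℝ) :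
    (mixM S X).det =
      (X.submatrix (fun i : {x // x ∈ S} => (i : n)) (fun i : {x // x ∈ S} => (i : n))).det := by
  classical
  let e : {x // x ∈ S} ⊕ {x // ¬ x ∈ S} ≃ n := Equiv.sumCompl (· ∈ S)
  rw [← Matrix.det_submatrix_equiv_self e]
  have : (mixM S X).submatrix e e =
      Matrix.fromBlocks
        (X.submatrix (fun i : {x // x ∈ S} => (i : n)) (fun i : {x // x ∈ S} => (i : n)))
        (X.submatrix (fun i : {x // x ∈ S} => (i : n)) (fun i : {x // ¬ x ∈ S} => (i : n)))
        0 1 := by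
    ext i j
    have hmix : ∀ a b : n, mixM S X a b = if a ∈ S then X a b else (1 : Matrix n n ℝ) a b :=
      fun a b => rfl
    rcases i with i | i <;> rcases j with j | j
    · simp [hmix, e, i.2]
    · simp [hmix, e, i.2]
    · have hne : (↑i : n) ≠ ↑j := fun h => i.2 (h ▸ j.2)
      simp [hmix, e, i.2, Matrix.one_apply, hne]
    · simp [hmix, e, i.2, Matrix.one_apply, Subtype.ext_iff]
  rw [this, Matrix.det_fromBlocks_zero₂₁, Matrix.det_one, mul_one]

lemma mixM_apply {n : Type*} [Fintype n] [DecidableEq n] (S : Finset n)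
    (X : Matrix n n ℝ) (i j : n) :
    mixM S X i j = if i ∈ S then X i j else (1 : Matrix n n ℝ) i j := rfl


theorem stmt6 {p q : ℕ} (A11 : Matrix (Fin p) (Fin p) ℝ) (A12 : Matrix (Fin p) (Fin q) ℝ)
    (A21 : Matrix (Fin q) (Fin p) ℝ) (A22 : Matrix (Fin q) (Fin q) ℝ)
    (hA22 : IsUnit A22.det)
    (hP : IsPMatrix (Matrix.fromBlocks A11 A12 A21 A22)) :
    IsPMatrix (Matrix.fromBlocks (A11 - A12 * A22⁻¹ * A21) (A12 * A22⁻¹)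
      (-(A22⁻¹ * A21)) A22⁻¹) := by
  classical
  intro S
  set A : Matrix (Fin p ⊕ Fin q) (Fin p ⊕ Fin q) ℝ := Matrix.fromBlocks A11 A12 A21 A22 with hA
  set B : Matrix (Fin p ⊕ Fin q) (Fin p ⊕ Fin q) ℝ :=
    Matrix.fromBlocks (A11 - A12 * A22⁻¹ * A21) (A12 * A22⁻¹) (-(A22⁻¹ * A21)) A22⁻¹ with hB
  set M1 : Matrix (Fin p ⊕ Fin q) (Fin p ⊕ Fin q) ℝ := Matrix.fromBlocks 1 0 A21 A22 with hM1
  set M2 : Matrix (Fin p ⊕ Fin q) (Fin p ⊕ Fin q) ℝ := Matrix.fromBlocks A11 A12 0 1 with hM2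
  have hinv : A22⁻¹ * A22 = 1 := Matrix.nonsing_inv_mul A22 hA22
  have hBM : B * M1 = M2 := by
    rw [hB, hM1, hM2, Matrix.fromBlocks_multiply]
    have e11 : (A11 - A12 * A22⁻¹ * A21) * (1 : Matrix (Fin p) (Fin p) ℝ)
        + A12 * A22⁻¹ * A21 = A11 := by
      rw [Matrix.mul_one]; exact sub_add_cancel _ _
    have e12 : (A11 - A12 * A22⁻¹ * A21) * (0 : Matrix (Fin p) (Fin q) ℝ)
        + A12 * A22⁻¹ * A22 = A12 := by
      rw [Matrix.mul_zero, zero_add, Matrix.mul_assoc, hinv, Matrix.mul_one]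
    have e21 : -(A22⁻¹ * A21) * (1 : Matrix (Fin p) (Fin p) ℝ) + A22⁻¹ * A21 = 0 := by
      rw [Matrix.mul_one, neg_add_cancel]
    have e22 : -(A22⁻¹ * A21) * (0 : Matrix (Fin p) (Fin q) ℝ) + A22⁻¹ * A22 = 1 := by
      rw [Matrix.mul_zero, zero_add, hinv]
    rw [e11, e12, e21, e22]
  set T : Finset (Fin p ⊕ Fin q) := Finset.univ.filter
      (fun i : Fin p ⊕ Fin q => (i.isLeft = true ∧ i ∈ S) ∨ (i.isRight = true ∧ i ∉ S)) with hT
  have hmemT : ∀ i : Fin p ⊕ Fin q,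
      i ∈ T ↔ ((i.isLeft = true ∧ i ∈ S) ∨ (i.isRight = true ∧ i ∉ S)) := by
    intro i; simp [hT]
  have hM1A : ∀ i j : Fin p ⊕ Fin q,
      M1 i j = if i.isRight = true then A i j else (1 : Matrix (Fin p ⊕ Fin q) (Fin p ⊕ Fin q) ℝ) i j := by
    intro i j
    rcases i with a | b <;> rcases j with c | d <;>
      simp [hM1, hA, Matrix.one_apply]
  have hM2A : ∀ i j : Fin p ⊕ Fin q,
      M2 i j = if i.isLeft = true then A i j else (1 : Matrix (Fin p ⊕ Fin q) (Fin p ⊕ Fin q) ℝ) i j := by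
    intro i j
    rcases i with a | b <;> rcases j with c | d <;>
      simp [hM2, hA, Matrix.one_apply]
  have hstep : mixM S B * M1 = mixM T A := by
    ext i j
    rw [mixM_mul_apply, hBM, mixM_apply, hM2A, hM1A]
    rcases i with a | b
    · simp only [Sum.isLeft_inl, Sum.isRight_inl, hmemT, Sum.isLeft_inl, Sum.isRight_inl]
      by_cases hiS : (Sum.inl a : Fin p ⊕ Fin q) ∈ S <;> simp [hiS]
    · simp only [hmemT, Sum.isLeft_inr, Sum.isRight_inr]
      by_cases hiS : (Sum.inr b : Fin p ⊕ Fin q) ∈ S <;> simp [hiS]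
  have hdet1 : (mixM S B).det * M1.det = (mixM T A).det := by
    rw [← Matrix.det_mul, hstep]
  have hM1mix : M1 = mixM (Finset.univ.filter (fun i : Fin p ⊕ Fin q => i.isRight = true)) A := by
    ext i j
    rw [hM1A, mixM_apply]
    simp
  have hM1pos : 0 < M1.det := by
    rw [hM1mix, det_mixM]; exact hP _
  have hTpos : 0 < (mixM T A).det := by rw [det_mixM]; exact hP T
  have hSpos : 0 < (mixM S B).det := by nlinarith [hM1pos, hTpos, hdet1]
  rw [← det_mixM]
  exact hSpos
end

section
/- Let W satisfy det(I − ΣW) ≠ 0 for all 0/1 diagonal matrices Σ, and for σ ∈ {0,ℓ}ⁿ define the equilibrium candidate x*_σ = (I − ΣW)⁻¹Σd, where Σ is diagonal with Σ_{ii}=1 iff σ_i = ℓ. Then W x*_σ + d = (I − WΣ)⁻¹ d, and x*_σ lies in the switching region Ω_σ = {x : (Wx+d)_i ≤ 0 if σ_i = 0, (Wx+d)_i ≥ 0 if σ_i = ℓ} if and only if (2Σ − I)(I − WΣ)⁻¹ d ≥ 0. -/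
open Matrix
open scoped ENNReal

theorem stmt10 {n : ℕ} (W : Matrix (Fin n) (Fin n) ℝ) (d : Fin n → ℝ)
    (hinv : ∀ σ : Fin n → ℝ, (∀ i, σ i = 0 ∨ σ i = 1) →
      (1 - Matrix.diagonal σ * W).det ≠ 0 ∧ (1 - W * Matrix.diagonal σ).det ≠ 0)
    (σ : Fin n → ℝ) (hσ : ∀ i, σ i = 0 ∨ σ i = 1) :
    let xstar := (1 - Matrix.diagonal σ * W)⁻¹.mulVec ((Matrix.diagonal σ).mulVec d)
    (W.mulVec xstar + d = (1 - W * Matrix.diagonal σ)⁻¹.mulVec d) ∧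
    ((∀ i, (σ i = 0 → (W.mulVec xstar + d) i ≤ 0) ∧ (σ i = 1 → 0 ≤ (W.mulVec xstar + d) i)) ↔
      ∀ i, 0 ≤ (((2 : ℝ) • Matrix.diagonal σ - 1) *
        (1 - W * Matrix.diagonal σ)⁻¹).mulVec d i) := by
  intro xstar
  set S := Matrix.diagonal σ with hS
  obtain ⟨h1, h2⟩ := hinv σ hσ
  have h1u : IsUnit (1 - S * W).det := isUnit_iff_ne_zero.2 h1
  have hA : (1 - S * W) * (1 - S * W)⁻¹ = 1 := Matrix.mul_nonsing_inv _ h1u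
  have key : W * (1 - S * W)⁻¹ * S + 1 = (1 - W * S)⁻¹ := by
    refine (Matrix.inv_eq_right_inv ?_).symm
    have e : (1 - W * S) * (W * (1 - S * W)⁻¹ * S + 1)
        = W * ((1 - S * W) * (1 - S * W)⁻¹) * S + (1 - W * S) := by noncomm_ring
    rw [e, hA]
    noncomm_ring
  have part1 : W.mulVec xstar + d = (1 - W * S)⁻¹.mulVec d := by
    have := congrArg (fun M => M.mulVec d) key
    simp only [Matrix.add_mulVec, Matrix.one_mulVec] at this
    rw [← this]
    simp [xstar, hS, Matrix.mulVec_mulVec, Matrix.mul_assoc]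
  refine ⟨part1, ?_⟩
  set y := (1 - W * S)⁻¹.mulVec d with hy
  have hval : ∀ i, (((2 : ℝ) • S - 1) * (1 - W * S)⁻¹).mulVec d i
      = 2 * σ i * y i - y i := by
    intro i
    have hd : ((2 : ℝ) • S - 1) = Matrix.diagonal (fun j => 2 * σ j - 1) := by
      ext a b
      by_cases hab : a = b <;> simp [hS, Matrix.diagonal_apply, hab, Matrix.one_apply]
    rw [← Matrix.mulVec_mulVec, hd, Matrix.mulVec_diagonal, ← hy]
    ring
  have hxi : ∀ i, (W.mulVec xstar + d) i = y i := fun i => by rw [part1]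
  constructor
  · intro h i
    rw [hval i]
    rcases hσ i with h0 | h1
    · have := (h i).1 h0
      rw [hxi i] at this
      rw [h0]; linarith
    · have := (h i).2 h1
      rw [hxi i] at this
      rw [h1]; linarith
  · intro h i
    have hv := h i
    rw [hval i] at hv
    constructor
    · intro h0
      rw [h0] at hv
      rw [hxi i]; linarith
    · intro h1
      rw [h1] at hv
      rw [hxi i]; linarith
end

section
/- Consider τẋ = −x + [Wx + d]₀^m with m finite or infinite. If W is totally L-stable (there is P = Pᵀ ≻ 0 with (−I + WᵀΣ)P + P(−I + ΣW) ≺ 0 for all 0/1 diagonal Σ), then for every constant d ∈ ℝⁿ the system has a unique equilibrium x* and is globally exponentially stable relative to x*. -/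
open Matrix
open scoped ENNReal

namespace Stmt13Aux

/-! ### Scalar clamp lemmas -/

lemma clamp1_eq (c : ℝ≥0∞) (r : ℝ) :
    (min (ENNReal.ofReal r) c).toReal = if c = ⊤ then max r 0 else min (max r 0) c.toReal := by
  split_ifs with hc
  · simp [hc, ENNReal.toReal_ofReal']
  · rw [ENNReal.toReal_min ENNReal.ofReal_ne_top hc, ENNReal.toReal_ofReal']

lemma clamp1_slope (c : ℝ≥0∞) (a b : ℝ) :
    ∃ s : ℝ, 0 ≤ s ∧ s ≤ 1 ∧
      (min (ENNReal.ofReal a) c).toReal - (min (ENNReal.ofReal b) c).toReal = s * (a - b) := by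
  have key : ∀ a b : ℝ, b ≤ a →
      0 ≤ (min (ENNReal.ofReal a) c).toReal - (min (ENNReal.ofReal b) c).toReal ∧
      (min (ENNReal.ofReal a) c).toReal - (min (ENNReal.ofReal b) c).toReal ≤ a - b := by
    intro a b hba
    have hc0 : (0:ℝ) ≤ c.toReal := ENNReal.toReal_nonneg
    rw [clamp1_eq, clamp1_eq]
    split_ifs with hc
    · constructor
      · rcases le_total a 0 with h|h <;> rcases le_total b 0 with h'|h' <;>
          simp [max_def] <;> split_ifs <;> linarith
      · rcases le_total a 0 with h|h <;> rcases le_total b 0 with h'|h' <;>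
          simp [max_def] <;> split_ifs <;> linarith
    · constructor
      · rcases le_total a 0 with h|h <;> rcases le_total b 0 with h'|h' <;>
          simp [max_def, min_def] <;> split_ifs <;> linarith
      · rcases le_total a 0 with h|h <;> rcases le_total b 0 with h'|h' <;>
          simp [max_def, min_def] <;> split_ifs <;> linarith
  have main : ∀ a b : ℝ, b ≤ a → ∃ s : ℝ, 0 ≤ s ∧ s ≤ 1 ∧
      (min (ENNReal.ofReal a) c).toReal - (min (ENNReal.ofReal b) c).toReal = s * (a - b) := by
    intro a b hba
    rcases eq_or_lt_of_le hba with rfl | hlt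
    · exact ⟨0, le_rfl, zero_le_one, by simp⟩
    · obtain ⟨h1, h2⟩ := key a b hba
      refine ⟨((min (ENNReal.ofReal a) c).toReal - (min (ENNReal.ofReal b) c).toReal) / (a - b),
        div_nonneg h1 (by linarith), (div_le_one (by linarith)).2 h2, ?_⟩
      rw [div_mul_eq_mul_div, mul_div_assoc, div_self (by linarith), mul_one]
  rcases le_total b a with h | h
  · exact main a b h
  · obtain ⟨s, h0, h1, he⟩ := main b a h
    exact ⟨s, h0, h1, by linarith⟩

/-! ### Quadratic form basics -/

variable {n : ℕ}

lemma dot_sym {P : Matrix (Fin n) (Fin n) ℝ} (hPt : Pᵀ = P) (a b : Fin n → ℝ) :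
    a ⬝ᵥ (P *ᵥ b) = b ⬝ᵥ (P *ᵥ a) := by
  rw [dotProduct_mulVec, dotProduct_comm, ← mulVec_transpose, hPt]

lemma quad_smul (M : Matrix (Fin n) (Fin n) ℝ) (r : ℝ) (e : Fin n → ℝ) :
    (r • e) ⬝ᵥ (M *ᵥ (r • e)) = r ^ 2 * (e ⬝ᵥ (M *ᵥ e)) := by
  rw [mulVec_smul, dotProduct_smul, smul_dotProduct]
  simp [smul_eq_mul]; ring

/-- the relevant Lyapunov quadratic matrix -/
def Qm (W P : Matrix (Fin n) (Fin n) ℝ) (σ : Fin n → ℝ) : Matrix (Fin n) (Fin n) ℝ :=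
  -((-1 + Wᵀ * Matrix.diagonal σ) * P + P * (-1 + Matrix.diagonal σ * W))

def Am (W : Matrix (Fin n) (Fin n) ℝ) (σ : Fin n → ℝ) : Matrix (Fin n) (Fin n) ℝ :=
  -1 + Matrix.diagonal σ * W

lemma Am_mulVec (W : Matrix (Fin n) (Fin n) ℝ) (σ : Fin n → ℝ) (e : Fin n → ℝ) (i : Fin n) :
    (Am W σ *ᵥ e) i = -(e i) + σ i * ((W *ᵥ e) i) := by
  unfold Am
  rw [add_mulVec, neg_mulVec, one_mulVec]
  simp only [Pi.add_apply, Pi.neg_apply]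
  rw [← mulVec_mulVec, mulVec_diagonal]

lemma Qrel {W P : Matrix (Fin n) (Fin n) ℝ} (hPt : Pᵀ = P) (σ : Fin n → ℝ) (e : Fin n → ℝ) :
    e ⬝ᵥ (Qm W P σ *ᵥ e) = -2 * (e ⬝ᵥ (P *ᵥ (Am W σ *ᵥ e))) := by
  have hAt : (-1 + Wᵀ * Matrix.diagonal σ) = (Am W σ)ᵀ := by
    unfold Am
    rw [transpose_add, transpose_neg, transpose_one, transpose_mul, diagonal_transpose]
  have hA2 : (-1 + Matrix.diagonal σ * W : Matrix (Fin n) (Fin n) ℝ) = Am W σ := rfl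
  unfold Qm
  rw [hA2, hAt, neg_mulVec, add_mulVec, dotProduct_neg, dotProduct_add,
    ← mulVec_mulVec, ← mulVec_mulVec]
  have h1 : e ⬝ᵥ ((Am W σ)ᵀ *ᵥ (P *ᵥ e)) = (Am W σ *ᵥ e) ⬝ᵥ (P *ᵥ e) := by
    rw [dotProduct_mulVec, vecMul_transpose]
  have h2 : (Am W σ *ᵥ e) ⬝ᵥ (P *ᵥ e) = e ⬝ᵥ (P *ᵥ (Am W σ *ᵥ e)) := dot_sym hPt _ _
  rw [h1, h2]; ring

lemma qv_expand {P : Matrix (Fin n) (Fin n) ℝ} (hPt : Pᵀ = P) (ε : ℝ) (e w : Fin n → ℝ) :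
    (e + ε • w) ⬝ᵥ (P *ᵥ (e + ε • w)) =
      e ⬝ᵥ (P *ᵥ e) + 2 * ε * (e ⬝ᵥ (P *ᵥ w)) + ε ^ 2 * (w ⬝ᵥ (P *ᵥ w)) := by
  have hsym := dot_sym hPt w e
  simp only [mulVec_add, mulVec_smul, dotProduct_add, add_dotProduct, dotProduct_smul,
    smul_dotProduct, smul_eq_mul]
  rw [hsym]; ring

/-! ### Convexity / cube positive definiteness -/

lemma Qm_eq (W P : Matrix (Fin n) (Fin n) ℝ) (σ : Fin n → ℝ) :
    Qm W P σ = P + P - Wᵀ * Matrix.diagonal σ * P - P * (Matrix.diagonal σ * W) := by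
  unfold Qm; noncomm_ring

lemma posdef_convex {A B : Matrix (Fin n) (Fin n) ℝ} (t : ℝ) (h0 : 0 ≤ t) (h1 : t ≤ 1)
    (hA : A.PosDef) (hB : B.PosDef) : ((1 - t) • A + t • B).PosDef := by
  rw [posDef_iff_dotProduct_mulVec]
  constructor
  · show ((1 - t) • A + t • B)ᴴ = _
    rw [conjTranspose_add, conjTranspose_smul, conjTranspose_smul, hA.1, hB.1,
      star_trivial, star_trivial]
  · intro x hx
    have ha := hA.dotProduct_mulVec_pos hx
    have hb := hB.dotProduct_mulVec_pos hx
    simp only [star_trivial] at ha hb ⊢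
    rw [add_mulVec, smul_mulVec, smul_mulVec, dotProduct_add,
      dotProduct_smul, dotProduct_smul, smul_eq_mul, smul_eq_mul]
    rcases eq_or_lt_of_le h0 with h | h
    · rw [← h]; ring_nf; linarith
    · nlinarith [mul_nonneg (sub_nonneg.2 h1) ha.le, mul_pos h hb]

lemma cube_posdef (W P : Matrix (Fin n) (Fin n) ℝ)
    (hbin : ∀ σ : Fin n → ℝ, (∀ i, σ i = 0 ∨ σ i = 1) → (Qm W P σ).PosDef) :
    ∀ σ : Fin n → ℝ, (∀ i, 0 ≤ σ i ∧ σ i ≤ 1) → (Qm W P σ).PosDef := by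
  suffices H : ∀ S : Finset (Fin n), ∀ σ : Fin n → ℝ, (∀ i, 0 ≤ σ i ∧ σ i ≤ 1) →
      (∀ i ∉ S, σ i = 0 ∨ σ i = 1) → (Qm W P σ).PosDef by
    intro σ hσ
    exact H Finset.univ σ hσ (fun i hi => absurd (Finset.mem_univ i) hi)
  intro S
  induction S using Finset.induction_on with
  | empty => intro σ hσ hb; exact hbin σ (fun i => hb i (Finset.notMem_empty i))
  | @insert a S ha IH =>
    intro σ hσ hb
    set t := σ a with hta
    set σ0 := Function.update σ a (0:ℝ) with hσ0
    set σ1 := Function.update σ a (1:ℝ) with hσ1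
    have hcomb : σ = (1 - t) • σ0 + t • σ1 := by
      funext i
      by_cases hia : i = a
      · subst hia; simp [σ0, σ1, hta]
      · simp [σ0, σ1, Function.update_of_ne hia]; ring
    have hdiag : Matrix.diagonal σ =
        (1 - t) • Matrix.diagonal σ0 + t • Matrix.diagonal σ1 := by
      ext i j
      rcases eq_or_ne i j with rfl | hij
      · simp [Matrix.diagonal_apply_eq, hcomb]
      · simp [Matrix.diagonal_apply_ne _ hij]
    have hQ : Qm W P σ = (1 - t) • Qm W P σ0 + t • Qm W P σ1 := by
      rw [Qm_eq, Qm_eq, Qm_eq, hdiag]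
      simp only [Matrix.add_mul, Matrix.mul_add, smul_mul_assoc, mul_smul_comm, smul_add,
        smul_sub]
      module
    rw [hQ]
    have h0 : (Qm W P σ0).PosDef := by
      apply IH σ0
      · intro i; by_cases hia : i = a
        · subst hia; simp [σ0]
        · simpa [σ0, Function.update_of_ne hia] using hσ i
      · intro i hi; by_cases hia : i = a
        · subst hia; simp [σ0]
        · rw [hσ0, Function.update_of_ne hia]
          exact hb i (by simp [Finset.mem_insert, hia, hi])
    have h1 : (Qm W P σ1).PosDef := by
      apply IH σ1
      · intro i; by_cases hia : i = a
        · subst hia; simp [σ1]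
        · simpa [σ1, Function.update_of_ne hia] using hσ i
      · intro i hi; by_cases hia : i = a
        · subst hia; simp [σ1]
        · rw [hσ1, Function.update_of_ne hia]
          exact hb i (by simp [Finset.mem_insert, hia, hi])
    exact posdef_convex t (hσ a).1 (hσ a).2 h0 h1

/-! ### Compactness constants -/

lemma sphere_scale {e : Fin n → ℝ} (he : e ≠ 0) :
    ∃ u : Fin n → ℝ, ‖u‖ = 1 ∧ e = ‖e‖ • u := by
  refine ⟨‖e‖⁻¹ • e, norm_smul_inv_norm (𝕜 := ℝ) he, ?_⟩
  rw [smul_smul, mul_inv_cancel₀ (norm_ne_zero_iff.2 he), one_smul]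

lemma hom_lower {f : (Fin n → ℝ) → ℝ} {α : ℝ} (hf0 : f 0 = 0)
    (hhom : ∀ (r : ℝ) (e : Fin n → ℝ), f (r • e) = r ^ 2 * f e)
    (h : ∀ u : Fin n → ℝ, ‖u‖ = 1 → α ≤ f u) (e : Fin n → ℝ) :
    α * ‖e‖ ^ 2 ≤ f e := by
  by_cases he : e = 0
  · simp [he, hf0]
  · obtain ⟨u, hu, heu⟩ := sphere_scale he
    have := h u hu
    have hnn : (0:ℝ) ≤ ‖e‖ ^ 2 := by positivity
    have hq : f e = ‖e‖ ^ 2 * f u := by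
      conv_lhs => rw [heu]
      rw [hhom]
    nlinarith

lemma hom_upper {f : (Fin n → ℝ) → ℝ} {β : ℝ} (hf0 : f 0 = 0)
    (hhom : ∀ (r : ℝ) (e : Fin n → ℝ), f (r • e) = r ^ 2 * f e)
    (h : ∀ u : Fin n → ℝ, ‖u‖ = 1 → f u ≤ β) (e : Fin n → ℝ) :
    f e ≤ β * ‖e‖ ^ 2 := by
  by_cases he : e = 0
  · simp [he, hf0]
  · obtain ⟨u, hu, heu⟩ := sphere_scale he
    have := h u hu
    have hnn : (0:ℝ) ≤ ‖e‖ ^ 2 := by positivity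
    have hq : f e = ‖e‖ ^ 2 * f u := by
      conv_lhs => rw [heu]
      rw [hhom]
    nlinarith

set_option maxHeartbeats 2000000 in
lemma exists_constants [Nonempty (Fin n)] (W P : Matrix (Fin n) (Fin n) ℝ) (hP : P.PosDef)
    (hQ : ∀ σ : Fin n → ℝ, (∀ i, 0 ≤ σ i ∧ σ i ≤ 1) → (Qm W P σ).PosDef) :
    ∃ α > (0:ℝ), ∃ β1 > (0:ℝ), ∃ β2 > (0:ℝ), ∃ C ≥ (0:ℝ),
      (∀ σ : Fin n → ℝ, (∀ i, 0 ≤ σ i ∧ σ i ≤ 1) →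
        ∀ e, α * ‖e‖ ^ 2 ≤ e ⬝ᵥ (Qm W P σ *ᵥ e)) ∧
      (∀ e : Fin n → ℝ, β1 * ‖e‖ ^ 2 ≤ e ⬝ᵥ (P *ᵥ e)) ∧
      (∀ e : Fin n → ℝ, e ⬝ᵥ (P *ᵥ e) ≤ β2 * ‖e‖ ^ 2) ∧
      (∀ σ : Fin n → ℝ, (∀ i, 0 ≤ σ i ∧ σ i ≤ 1) →
        ∀ e, (Am W σ *ᵥ e) ⬝ᵥ (P *ᵥ (Am W σ *ᵥ e)) ≤ C * ‖e‖ ^ 2) := by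
  have quad_nonneg : ∀ z : Fin n → ℝ, 0 ≤ z ⬝ᵥ (P *ᵥ z) := fun z => by
    simpa using hP.posSemidef.dotProduct_mulVec_nonneg z
  set S : Set (Fin n → ℝ) := Metric.sphere 0 1 with hS
  have hScomp : IsCompact S := isCompact_sphere 0 1
  have hSne : S.Nonempty := ⟨fun _ => (1:ℝ), by
    simp [hS, mem_sphere_zero_iff_norm]⟩
  have hSmem : ∀ u ∈ S, ‖u‖ = 1 := fun u hu => mem_sphere_zero_iff_norm.1 hu
  set K1 : Set (Fin n → ℝ) := Set.Icc 0 1 with hK1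
  have hK1comp : IsCompact K1 := isCompact_Icc
  have hK1mem : ∀ σ, σ ∈ K1 ↔ (∀ i, 0 ≤ σ i ∧ σ i ≤ 1) := by
    intro σ
    constructor
    · rintro ⟨h0, h1⟩ i; exact ⟨h0 i, h1 i⟩
    · intro h; exact ⟨fun i => (h i).1, fun i => (h i).2⟩
  set K : Set ((Fin n → ℝ) × (Fin n → ℝ)) := K1 ×ˢ S with hK
  have hKcomp : IsCompact K := hK1comp.prod hScomp
  have hKne : K.Nonempty := Set.Nonempty.prod ⟨0, by simp [hK1]⟩ hSne
  have hdiagc : Continuous fun σ : Fin n → ℝ => Matrix.diagonal σ :=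
    continuous_id.matrix_diagonal
  have hQc : Continuous fun σ : Fin n → ℝ => Qm W P σ := by
    unfold Qm
    exact (((continuous_const.add (continuous_const.matrix_mul hdiagc)).matrix_mul
      continuous_const).add
      (continuous_const.matrix_mul (continuous_const.add
        (hdiagc.matrix_mul continuous_const)))).neg
  have hAc : Continuous fun σ : Fin n → ℝ => Am W σ := by
    unfold Am
    exact continuous_const.add (hdiagc.matrix_mul continuous_const)
  -- α
  have hFαc : Continuous fun p : (Fin n → ℝ) × (Fin n → ℝ) =>
      p.2 ⬝ᵥ (Qm W P p.1 *ᵥ p.2) :=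
    continuous_snd.dotProduct ((hQc.comp continuous_fst).matrix_mulVec continuous_snd)
  obtain ⟨pα, hpαK, hpαmin⟩ := hKcomp.exists_isMinOn hKne hFαc.continuousOn
  rw [isMinOn_iff] at hpαmin
  have hαpos : 0 < pα.2 ⬝ᵥ (Qm W P pα.1 *ᵥ pα.2) := by
    have h1 := (hK1mem pα.1).1 (Set.mem_prod.1 hpαK).1
    have h2 := hSmem pα.2 (Set.mem_prod.1 hpαK).2
    have := (hQ pα.1 h1).dotProduct_mulVec_pos (x := pα.2) (by intro h; rw [h] at h2; simp at h2)
    simpa using this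
  -- β1 β2
  have hFβc : Continuous fun e : Fin n → ℝ => e ⬝ᵥ (P *ᵥ e) :=
    continuous_id.dotProduct (continuous_const.matrix_mulVec continuous_id)
  obtain ⟨eβ1, heβ1S, heβ1min⟩ := hScomp.exists_isMinOn hSne hFβc.continuousOn
  rw [isMinOn_iff] at heβ1min
  obtain ⟨eβ2, heβ2S, heβ2max⟩ := hScomp.exists_isMaxOn hSne hFβc.continuousOn
  rw [isMaxOn_iff] at heβ2max
  have hβ1pos : 0 < eβ1 ⬝ᵥ (P *ᵥ eβ1) := by
    have h2 := hSmem eβ1 heβ1S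
    have := hP.dotProduct_mulVec_pos (x := eβ1) (by intro h; rw [h] at h2; simp at h2)
    simpa using this
  have hβ2pos : 0 < eβ2 ⬝ᵥ (P *ᵥ eβ2) :=
    lt_of_lt_of_le hβ1pos (heβ2max eβ1 heβ1S)
  -- C
  have hFCc : Continuous fun p : (Fin n → ℝ) × (Fin n → ℝ) =>
      (Am W p.1 *ᵥ p.2) ⬝ᵥ (P *ᵥ (Am W p.1 *ᵥ p.2)) := by
    have h1 : Continuous fun p : (Fin n → ℝ) × (Fin n → ℝ) => Am W p.1 *ᵥ p.2 :=
      (hAc.comp continuous_fst).matrix_mulVec continuous_snd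
    exact h1.dotProduct (continuous_const.matrix_mulVec h1)
  obtain ⟨pC, hpCK, hpCmax⟩ := hKcomp.exists_isMaxOn hKne hFCc.continuousOn
  rw [isMaxOn_iff] at hpCmax
  refine ⟨_, hαpos, _, hβ1pos, _, hβ2pos,
    (Am W pC.1 *ᵥ pC.2) ⬝ᵥ (P *ᵥ (Am W pC.1 *ᵥ pC.2)), quad_nonneg _, ?_, ?_, ?_, ?_⟩
  · intro σ hσ e
    apply hom_lower (f := fun e => e ⬝ᵥ (Qm W P σ *ᵥ e)) (by simp) (quad_smul _)
    intro u hu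
    exact hpαmin (σ, u) (Set.mem_prod.2 ⟨(hK1mem σ).2 hσ, mem_sphere_zero_iff_norm.2 hu⟩)
  · intro e
    apply hom_lower (f := fun e => e ⬝ᵥ (P *ᵥ e)) (by simp) (quad_smul _)
    intro u hu
    exact heβ1min u (mem_sphere_zero_iff_norm.2 hu)
  · intro e
    apply hom_upper (f := fun e => e ⬝ᵥ (P *ᵥ e)) (by simp) (quad_smul _)
    intro u hu
    exact heβ2max u (mem_sphere_zero_iff_norm.2 hu)
  · intro σ hσ e
    have hf0 : (fun e => (Am W σ *ᵥ e) ⬝ᵥ (P *ᵥ (Am W σ *ᵥ e))) 0 = 0 := by simp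
    have hhom : ∀ (r : ℝ) (e : Fin n → ℝ),
        (fun e => (Am W σ *ᵥ e) ⬝ᵥ (P *ᵥ (Am W σ *ᵥ e))) (r • e)
          = r ^ 2 * (fun e => (Am W σ *ᵥ e) ⬝ᵥ (P *ᵥ (Am W σ *ᵥ e))) e := by
      intro r e
      simp only
      rw [mulVec_smul, quad_smul]
    have hb : ∀ u : Fin n → ℝ, ‖u‖ = 1 →
        (fun e => (Am W σ *ᵥ e) ⬝ᵥ (P *ᵥ (Am W σ *ᵥ e))) u ≤
          Am W pC.1 *ᵥ pC.2 ⬝ᵥ P *ᵥ (Am W pC.1 *ᵥ pC.2) := by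
      intro u hu
      exact hpCmax (σ, u) (Set.mem_prod.2 ⟨(hK1mem σ).2 hσ, mem_sphere_zero_iff_norm.2 hu⟩)
    exact hom_upper hf0 hhom hb e

/-! ### Derivative of the quadratic Lyapunov function -/

lemma bilin_hasDerivAt (P : Matrix (Fin n) (Fin n) ℝ) {f : ℝ → Fin n → ℝ} {f' : Fin n → ℝ}
    {t : ℝ} (hf : HasDerivAt f f' t) :
    HasDerivAt (fun s => f s ⬝ᵥ (P *ᵥ f s))
      (f' ⬝ᵥ (P *ᵥ f t) + f t ⬝ᵥ (P *ᵥ f')) t := by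
  have hcomp : ∀ i : Fin n, HasDerivAt (fun s => f s i) (f' i) t := by
    intro i
    exact (ContinuousLinearMap.proj (R := ℝ) (φ := fun _ : Fin n => ℝ)
      i).hasFDerivAt.comp_hasDerivAt t hf
  have hsum : HasDerivAt (fun s => ∑ i, f s i * (∑ j, P i j * f s j))
      (∑ i, (f' i * (∑ j, P i j * f t j) + f t i * (∑ j, P i j * f' j))) t := by
    apply HasDerivAt.fun_sum
    intro i _
    exact (hcomp i).mul (HasDerivAt.fun_sum (fun j _ => (hcomp j).const_mul (P i j)))
  have hfun : (fun s => f s ⬝ᵥ (P *ᵥ f s)) = fun s => ∑ i, f s i * (∑ j, P i j * f s j) := by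
    funext s; simp [dotProduct, mulVec]
  have hval : f' ⬝ᵥ (P *ᵥ f t) + f t ⬝ᵥ (P *ᵥ f')
      = ∑ i, (f' i * (∑ j, P i j * f t j) + f t i * (∑ j, P i j * f' j)) := by
    simp [dotProduct, mulVec, Finset.sum_add_distrib]
  rw [hfun, hval]
  exact hsum

lemma sqrt_pow_eq (ρ : ℝ) (hρ : 0 ≤ ρ) : ∀ k : ℕ, Real.sqrt (ρ ^ k) = (Real.sqrt ρ) ^ k := by
  intro k
  induction k with
  | zero => simp
  | succ k ih => rw [pow_succ, pow_succ, Real.sqrt_mul (pow_nonneg hρ k), ih]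

end Stmt13Aux
open Stmt13Aux in
set_option maxHeartbeats 2000000 in
theorem stmt13 {n : ℕ} (τ : ℝ) (hτ : 0 < τ) (W : Matrix (Fin n) (Fin n) ℝ)
    (m : Fin n → ℝ≥0∞) (hm : ∀ i, 0 < m i)
    (hL : TotallyLStable W) (d : Fin n → ℝ) :
    ∃ xs : Fin n → ℝ, xs = clamp m (W.mulVec xs + d) ∧
      (∀ y : Fin n → ℝ, y = clamp m (W.mulVec y + d) → y = xs) ∧
      ∃ c > (0 : ℝ), ∃ lam > (0 : ℝ), ∀ x : ℝ → (Fin n → ℝ),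
        (∀ i, 0 ≤ x 0 i ∧ ENNReal.ofReal (x 0 i) ≤ m i) →
        (∀ t, 0 ≤ t → HasDerivAt x (τ⁻¹ • (-(x t) + clamp m (W.mulVec (x t) + d))) t) →
        ∀ t, 0 ≤ t → ‖x t - xs‖ ≤ c * Real.exp (-lam * t) * ‖x 0 - xs‖ := by
  classical
  rcases Nat.eq_zero_or_pos n with hn0 | hnpos
  · subst hn0
    refine ⟨0, Subsingleton.elim _ _, fun y _ => Subsingleton.elim _ _,
      1, one_pos, 1, one_pos, ?_⟩
    intro x _ _ t _
    have hx0 : x t - 0 = 0 := Subsingleton.elim _ _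
    rw [hx0, norm_zero]
    positivity
  haveI : Nonempty (Fin n) := Fin.pos_iff_nonempty.1 hnpos
  obtain ⟨P, hP, hbin⟩ := hL
  have hPt : Pᵀ = P := by
    have h := hP.1
    rwa [Matrix.IsHermitian, conjTranspose_eq_transpose_of_trivial] at h
  have hbin' : ∀ σ : Fin n → ℝ, (∀ i, σ i = 0 ∨ σ i = 1) → (Qm W P σ).PosDef := by
    intro σ h; unfold Qm; exact hbin σ h
  have hQ := cube_posdef W P hbin'
  obtain ⟨α, hα, β1, hβ1, β2, hβ2, C, hC, hQbound, hPlow, hPupp, hCbound⟩ :=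
    exists_constants W P hP hQ
  -- the clamp map
  set G : (Fin n → ℝ) → (Fin n → ℝ) := fun z => clamp m (W *ᵥ z + d) with hGdef
  have hGdiff : ∀ z y : Fin n → ℝ, ∃ σ : Fin n → ℝ, (∀ i, 0 ≤ σ i ∧ σ i ≤ 1) ∧
      (-(z - y) + (G z - G y)) = Am W σ *ᵥ (z - y) := by
    intro z y
    choose σ h0 h1 heq using
      fun i => clamp1_slope (m i) ((W *ᵥ z + d) i) ((W *ᵥ y + d) i)
    refine ⟨σ, fun i => ⟨h0 i, h1 i⟩, ?_⟩
    funext i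
    have hWi : (W *ᵥ z + d) i - (W *ᵥ y + d) i = (W *ᵥ (z - y)) i := by
      rw [mulVec_sub]; simp
    have hclamp : G z i - G y i = σ i * ((W *ᵥ (z - y)) i) := by
      rw [← hWi]; exact heq i
    calc (-(z - y) + (G z - G y)) i = -(z i - y i) + (G z i - G y i) := rfl
      _ = -((z - y) i) + σ i * ((W *ᵥ (z - y)) i) := by rw [hclamp]; rfl
      _ = (Am W σ *ᵥ (z - y)) i := (Am_mulVec W σ (z - y) i).symm
  -- central estimates
  have key : ∀ z y : Fin n → ℝ,
      (z - y) ⬝ᵥ (P *ᵥ (-(z - y) + (G z - G y))) ≤ -(α / 2) * ‖z - y‖ ^ 2 ∧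
      (-(z - y) + (G z - G y)) ⬝ᵥ (P *ᵥ (-(z - y) + (G z - G y))) ≤ C * ‖z - y‖ ^ 2 := by
    intro z y
    obtain ⟨σ, hσ, hw⟩ := hGdiff z y
    constructor
    · have h1 := hQbound σ hσ (z - y)
      rw [Qrel hPt σ (z - y)] at h1
      rw [hw]
      linarith
    · rw [hw]
      exact hCbound σ hσ (z - y)
  -- contraction parameters
  set ε : ℝ := α / (2 * (C + 1)) with hεdef
  have hεpos : 0 < ε := by positivity
  have hεC : ε * (C + 1) = α / 2 := by
    rw [hεdef]; field_simp
  set δ : ℝ := ε * α - ε ^ 2 * C with hδdef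
  have hδpos : 0 < δ := by
    have h2 : ε * (ε * (C + 1)) = ε * (α / 2) := by rw [hεC]
    have h3 : ε ^ 2 * C = ε * (α / 2) - ε ^ 2 := by nlinarith [h2]
    have h4 : 0 < ε * α := mul_pos hεpos hα
    have h5 : 0 ≤ ε ^ 2 := sq_nonneg ε
    rw [hδdef, h3]
    nlinarith
  set T : (Fin n → ℝ) → (Fin n → ℝ) := fun z => z + ε • (-z + G z) with hTdef
  have hTsub : ∀ z y : Fin n → ℝ,
      T z - T y = (z - y) + ε • (-(z - y) + (G z - G y)) := by
    intro z y
    funext i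
    simp only [hTdef, Pi.add_apply, Pi.sub_apply, Pi.smul_apply, Pi.neg_apply, smul_eq_mul]
    ring
  have hvTc : ∀ z y : Fin n → ℝ,
      (T z - T y) ⬝ᵥ (P *ᵥ (T z - T y)) ≤
        (z - y) ⬝ᵥ (P *ᵥ (z - y)) - δ * ‖z - y‖ ^ 2 := by
    intro z y
    obtain ⟨h1, h2⟩ := key z y
    rw [hTsub, qv_expand hPt]
    have hε2 : (0:ℝ) ≤ ε ^ 2 := sq_nonneg ε
    nlinarith [mul_le_mul_of_nonneg_left h1 (by linarith : (0:ℝ) ≤ 2 * ε),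
      mul_le_mul_of_nonneg_left h2 hε2]
  set ρ : ℝ := max (1 - δ / β2) 0 with hρdef
  have hρ0 : 0 ≤ ρ := le_max_right _ _
  have hρ1 : ρ < 1 := by
    apply max_lt _ one_pos
    have : 0 < δ / β2 := div_pos hδpos hβ2
    linarith
  have hvT : ∀ z y : Fin n → ℝ,
      (T z - T y) ⬝ᵥ (P *ᵥ (T z - T y)) ≤ ρ * ((z - y) ⬝ᵥ (P *ᵥ (z - y))) := by
    intro z y
    have h3 := hPupp (z - y)
    have h4 := hPlow (z - y)
    have hve : 0 ≤ (z - y) ⬝ᵥ (P *ᵥ (z - y)) := le_trans (by positivity) h4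
    have h5 := hvTc z y
    have hmax1 : 1 - δ / β2 ≤ ρ := le_max_left _ _
    have hstep : δ / β2 * ((z - y) ⬝ᵥ (P *ᵥ (z - y))) ≤ δ * ‖z - y‖ ^ 2 := by
      rw [div_mul_eq_mul_div, div_le_iff₀ hβ2]
      nlinarith
    have h6 : (1 - δ / β2) * ((z - y) ⬝ᵥ (P *ᵥ (z - y))) ≤
        ρ * ((z - y) ⬝ᵥ (P *ᵥ (z - y))) := mul_le_mul_of_nonneg_right hmax1 hve
    nlinarith
  -- iterates converge to a fixed point
  set seq : ℕ → (Fin n → ℝ) := fun k => T^[k] 0 with hseqdef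
  have hseqS : ∀ k, seq (k + 1) = T (seq k) := fun k => Function.iterate_succ_apply' T k 0
  set v0 : ℝ := (seq 1 - seq 0) ⬝ᵥ (P *ᵥ (seq 1 - seq 0)) with hv0def
  have hv0nn : 0 ≤ v0 := le_trans (by positivity) (hPlow _)
  have hgeo : ∀ k, (seq (k + 1) - seq k) ⬝ᵥ (P *ᵥ (seq (k + 1) - seq k)) ≤ ρ ^ k * v0 := by
    intro k
    induction k with
    | zero => simp [hv0def]
    | succ k ih =>
      have h1 : seq (k + 1 + 1) - seq (k + 1) = T (seq (k + 1)) - T (seq k) := by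
        rw [hseqS (k + 1), hseqS k]
      rw [h1]
      calc (T (seq (k + 1)) - T (seq k)) ⬝ᵥ (P *ᵥ (T (seq (k + 1)) - T (seq k)))
          ≤ ρ * ((seq (k + 1) - seq k) ⬝ᵥ (P *ᵥ (seq (k + 1) - seq k))) := hvT _ _
        _ ≤ ρ * (ρ ^ k * v0) := mul_le_mul_of_nonneg_left ih hρ0
        _ = ρ ^ (k + 1) * v0 := by ring
  have hnormgeo : ∀ k, dist (seq k) (seq (k + 1)) ≤
      Real.sqrt (v0 / β1) * (Real.sqrt ρ) ^ k := by
    intro k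
    have h4 := hPlow (seq (k + 1) - seq k)
    have h5 := hgeo k
    have hsq : ‖seq (k + 1) - seq k‖ ^ 2 ≤ (v0 / β1) * ρ ^ k := by
      rw [div_mul_eq_mul_div, le_div_iff₀ hβ1]
      nlinarith
    have hs1 : ‖seq (k + 1) - seq k‖ = Real.sqrt (‖seq (k + 1) - seq k‖ ^ 2) :=
      (Real.sqrt_sq (norm_nonneg _)).symm
    rw [dist_eq_norm, norm_sub_rev, hs1]
    calc Real.sqrt (‖seq (k + 1) - seq k‖ ^ 2) ≤ Real.sqrt ((v0 / β1) * ρ ^ k) :=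
        Real.sqrt_le_sqrt hsq
      _ = Real.sqrt (v0 / β1) * (Real.sqrt ρ) ^ k := by
        rw [Real.sqrt_mul (by positivity), sqrt_pow_eq ρ hρ0]
  have hrr1 : Real.sqrt ρ < 1 := by
    have := Real.sqrt_lt_sqrt hρ0 hρ1
    rwa [Real.sqrt_one] at this
  have hcauchy : CauchySeq seq :=
    cauchySeq_of_le_geometric (Real.sqrt ρ) (Real.sqrt (v0 / β1)) hrr1 hnormgeo
  obtain ⟨xs, hxs⟩ := cauchySeq_tendsto_of_complete hcauchy
  -- continuity of T, hence fixed point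
  have hGcont : Continuous G := by
    have hlin : Continuous fun z : Fin n → ℝ => W *ᵥ z + d :=
      (continuous_const.matrix_mulVec continuous_id).add continuous_const
    have hclampc : Continuous fun y : Fin n → ℝ => clamp m y := by
      apply continuous_pi
      intro i
      have hco : (fun y : Fin n → ℝ => clamp m y i) =
          (fun r : ℝ => if m i = ⊤ then max r 0 else min (max r 0) (m i).toReal) ∘
            (fun y : Fin n → ℝ => y i) := by
        funext y
        simp only [Function.comp_apply, clamp, clamp1_eq]
      rw [hco]
      apply Continuous.comp _ (continuous_apply i)
      by_cases hc : m i = ⊤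
      · simpa [hc] using (continuous_id.max continuous_const : Continuous fun r : ℝ => max r 0)
      · simp only [if_neg hc]
        exact (continuous_id.max continuous_const).min continuous_const
    exact hclampc.comp hlin
  have hTcont : Continuous T :=
    continuous_id.add ((continuous_id.neg.add hGcont).const_smul ε)
  have hTfix : T xs = xs := by
    have h1 : Filter.Tendsto (fun k => T (seq k)) Filter.atTop (nhds (T xs)) :=
      (hTcont.tendsto xs).comp hxs
    have h2 : (fun k => T (seq k)) = fun k => seq (k + 1) :=
      funext fun k => (hseqS k).symm
    rw [h2] at h1
    have h3 : Filter.Tendsto (fun k => seq (k + 1)) Filter.atTop (nhds xs) :=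
      hxs.comp (Filter.tendsto_add_atTop_nat 1)
    exact tendsto_nhds_unique h1 h3
  have hfix : G xs = xs := by
    have h0 : ε • (-xs + G xs) = 0 := by
      have h := hTfix
      rw [hTdef] at h
      simpa using (add_eq_left.1 h)
    have h1 : -xs + G xs = 0 := by
      rcases smul_eq_zero.1 h0 with h | h
      · exact absurd h hεpos.ne'
      · exact h
    have := neg_add_eq_zero.1 h1
    exact this.symm
  refine ⟨xs, hfix.symm, ?_, ?_⟩
  · -- uniqueness
    intro y hy
    have hyfix : T y = y := by
      show y + ε • (-y + clamp m (W *ᵥ y + d)) = y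
      rw [← hy]
      simp
    have h := hvT y xs
    rw [hyfix, hTfix] at h
    have h4 := hPlow (y - xs)
    have hnz : ‖y - xs‖ = 0 := by
      by_contra hne
      have hpos : 0 < ‖y - xs‖ ^ 2 :=
        pow_pos (lt_of_le_of_ne (norm_nonneg _) (Ne.symm hne)) 2
      have h5 : 0 < (y - xs) ⬝ᵥ (P *ᵥ (y - xs)) :=
        lt_of_lt_of_le (mul_pos hβ1 hpos) h4
      have h6 := mul_lt_mul_of_pos_right hρ1 h5
      linarith
    exact sub_eq_zero.1 (norm_eq_zero.1 hnz)
  · -- global exponential stability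
    set Kc : ℝ := α / (τ * β2) with hKcdef
    have hKpos : 0 < Kc := by positivity
    refine ⟨Real.sqrt (β2 / β1), Real.sqrt_pos.2 (by positivity), Kc / 2, by positivity, ?_⟩
    intro x _ hxD t ht
    -- derivative of V s := (x s - xs) ⬝ᵥ (P *ᵥ (x s - xs))
    have hVd : ∀ s : ℝ, 0 ≤ s → HasDerivAt (fun u => (x u - xs) ⬝ᵥ (P *ᵥ (x u - xs)))
        (2 * ((x s - xs) ⬝ᵥ (P *ᵥ (τ⁻¹ • (-(x s) + G (x s)))))) s := by
      intro s hs
      have hE : HasDerivAt (fun u => x u - xs) (τ⁻¹ • (-(x s) + G (x s))) s :=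
        (hxD s hs).sub_const xs
      have h1 := bilin_hasDerivAt P hE
      have h2 : (τ⁻¹ • (-(x s) + G (x s))) ⬝ᵥ (P *ᵥ (x s - xs))
          = (x s - xs) ⬝ᵥ (P *ᵥ (τ⁻¹ • (-(x s) + G (x s)))) := dot_sym hPt _ _
      rw [h2] at h1
      convert h1 using 1
      ring
    -- derivative bound
    have hDb : ∀ s : ℝ, 0 ≤ s →
        2 * ((x s - xs) ⬝ᵥ (P *ᵥ (τ⁻¹ • (-(x s) + G (x s))))) ≤
          -Kc * ((x s - xs) ⬝ᵥ (P *ᵥ (x s - xs))) := by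
      intro s hs
      have hu : -(x s) + G (x s) = -(x s - xs) + (G (x s) - G xs) := by
        rw [hfix]
        funext i
        simp only [Pi.add_apply, Pi.neg_apply, Pi.sub_apply]
        ring
      have h1 := (key (x s) xs).1
      have hsm : (x s - xs) ⬝ᵥ (P *ᵥ (τ⁻¹ • (-(x s) + G (x s))))
          = τ⁻¹ * ((x s - xs) ⬝ᵥ (P *ᵥ (-(x s - xs) + (G (x s) - G xs)))) := by
        rw [hu, mulVec_smul, dotProduct_smul, smul_eq_mul]
      have h3 := hPupp (x s - xs)
      have hτi : 0 < τ⁻¹ := by positivity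
      have hKβ : Kc * β2 = α / τ := by
        rw [hKcdef]; field_simp
      rw [hsm]
      have h5 : τ⁻¹ * ((x s - xs) ⬝ᵥ (P *ᵥ (-(x s - xs) + (G (x s) - G xs))))
          ≤ τ⁻¹ * (-(α / 2) * ‖x s - xs‖ ^ 2) := by
        apply mul_le_mul_of_nonneg_left h1 hτi.le
      have h6 : -Kc * ((x s - xs) ⬝ᵥ (P *ᵥ (x s - xs))) ≥ -Kc * (β2 * ‖x s - xs‖ ^ 2) := by
        have := mul_le_mul_of_nonneg_left h3 hKpos.le
        linarith
      have h7 : -Kc * (β2 * ‖x s - xs‖ ^ 2) = -(α / τ) * ‖x s - xs‖ ^ 2 := by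
        rw [show -Kc * (β2 * ‖x s - xs‖ ^ 2) = -(Kc * β2) * ‖x s - xs‖ ^ 2 by ring, hKβ]
      -- 2 * τ⁻¹ * (e⬝Pw) ≤ 2 * τ⁻¹ * (-(α/2)‖e‖²) = -(α/τ)‖e‖² = -Kc β2 ‖e‖² ≤ -Kc V
      have hn2 : (0:ℝ) ≤ ‖x s - xs‖ ^ 2 := by positivity
      have hchain : 2 * (τ⁻¹ * ((x s - xs) ⬝ᵥ (P *ᵥ (-(x s - xs) + (G (x s) - G xs)))))
          ≤ -(α / τ) * ‖x s - xs‖ ^ 2 := by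
        have := mul_le_mul_of_nonneg_left h5 (by norm_num : (0:ℝ) ≤ 2)
        have heq : 2 * (τ⁻¹ * (-(α / 2) * ‖x s - xs‖ ^ 2)) = -(α / τ) * ‖x s - xs‖ ^ 2 := by
          field_simp
        linarith
      linarith
    -- the function V(s) * exp(Kc s) is antitone on [0, ∞)
    have hhd : ∀ s : ℝ, 0 ≤ s → HasDerivAt
        (fun u => ((x u - xs) ⬝ᵥ (P *ᵥ (x u - xs))) * Real.exp (Kc * u))
        ((2 * ((x s - xs) ⬝ᵥ (P *ᵥ (τ⁻¹ • (-(x s) + G (x s)))))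
            + Kc * ((x s - xs) ⬝ᵥ (P *ᵥ (x s - xs)))) * Real.exp (Kc * s)) s := by
      intro s hs
      have he : HasDerivAt (fun u : ℝ => Real.exp (Kc * u)) (Real.exp (Kc * s) * Kc) s := by
        have h1 : HasDerivAt (fun u : ℝ => Kc * u) Kc s := by
          simpa using (hasDerivAt_id s).const_mul Kc
        exact (Real.hasDerivAt_exp (Kc * s)).comp s h1
      have := (hVd s hs).fun_mul he
      exact this.congr_deriv (by ring)
    have hanti : AntitoneOn
        (fun u => ((x u - xs) ⬝ᵥ (P *ᵥ (x u - xs))) * Real.exp (Kc * u)) (Set.Ici 0) := by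
      apply antitoneOn_of_deriv_nonpos (convex_Ici 0)
      · intro s hs
        exact ((hhd s hs).continuousAt).continuousWithinAt
      · intro s hs
        rw [interior_Ici] at hs
        exact ((hhd s (le_of_lt hs)).differentiableAt).differentiableWithinAt
      · intro s hs
        rw [interior_Ici] at hs
        rw [(hhd s hs.le).deriv]
        have hb := hDb s hs.le
        have hexp : 0 < Real.exp (Kc * s) := Real.exp_pos _
        nlinarith
    have hVle : ((x t - xs) ⬝ᵥ (P *ᵥ (x t - xs))) * Real.exp (Kc * t) ≤
        (x 0 - xs) ⬝ᵥ (P *ᵥ (x 0 - xs)) := by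
      have h := hanti Set.self_mem_Ici (Set.mem_Ici.2 ht) ht
      simpa using h
    -- conclude
    have h1 := hPlow (x t - xs)
    have h2 := hPupp (x 0 - xs)
    have hexp : 0 < Real.exp (Kc * t) := Real.exp_pos _
    have hVt0 : (x t - xs) ⬝ᵥ (P *ᵥ (x t - xs)) ≤
        ((x 0 - xs) ⬝ᵥ (P *ᵥ (x 0 - xs))) * Real.exp (-(Kc * t)) := by
      rw [Real.exp_neg, ← div_eq_mul_inv, le_div_iff₀ hexp]
      exact hVle
    set R : ℝ := Real.sqrt (β2 / β1) * Real.exp (-(Kc / 2) * t) * ‖x 0 - xs‖ with hRdef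
    have hR0 : 0 ≤ R := by positivity
    have hRsq : R ^ 2 = (β2 / β1) * Real.exp (-(Kc * t)) * ‖x 0 - xs‖ ^ 2 := by
      have hhalf : -(Kc / 2) * t + -(Kc / 2) * t = -(Kc * t) := by ring
      rw [hRdef, mul_pow, mul_pow, Real.sq_sqrt (by positivity : (0:ℝ) ≤ β2 / β1),
        sq (Real.exp (-(Kc / 2) * t)), ← Real.exp_add, hhalf]
    have hsq : ‖x t - xs‖ ^ 2 ≤ R ^ 2 := by
      rw [hRsq]
      have h3 : ((x 0 - xs) ⬝ᵥ (P *ᵥ (x 0 - xs))) * Real.exp (-(Kc * t)) ≤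
          (β2 * ‖x 0 - xs‖ ^ 2) * Real.exp (-(Kc * t)) :=
        mul_le_mul_of_nonneg_right h2 (Real.exp_pos _).le
      have h4 : β1 * ‖x t - xs‖ ^ 2 ≤ β2 * ‖x 0 - xs‖ ^ 2 * Real.exp (-(Kc * t)) := by
        linarith
      rw [div_mul_eq_mul_div, div_mul_eq_mul_div, le_div_iff₀ hβ1]
      nlinarith
    calc ‖x t - xs‖ = Real.sqrt (‖x t - xs‖ ^ 2) := (Real.sqrt_sq (norm_nonneg _)).symm
      _ ≤ Real.sqrt (R ^ 2) := Real.sqrt_le_sqrt hsq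
      _ = R := Real.sqrt_sq hR0
end

section
/- For the linear-threshold dynamics τẋ = −x + [Wx + d]₀^m: if for all d ∈ ℝⁿ the network has a unique locally asymptotically stable equilibrium, then −I + W is totally Hurwitz. In particular, for any σ ∈ {0,1}ⁿ, choosing d = (2I − W)σ − 𝟙 makes x* = σ an equilibrium interior to the switching region Ω_σ, where the linearization is −I + ΣW. -/
open Matrix
open scoped ENNReal

open Set Filter
open scoped NNReal

section Aux
variable {n : ℕ}

lemma val_eq (W : Matrix (Fin n) (Fin n) ℝ) (σ : Fin n → ℝ) (i : Fin n) :
    (W.mulVec σ + (((2 : ℝ) • (1 : Matrix (Fin n) (Fin n) ℝ) - W).mulVec σ - 1)) i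
      = 2 * σ i - 1 := by
  simp only [Matrix.sub_mulVec, Matrix.smul_mulVec, Matrix.one_mulVec, Pi.add_apply,
    Pi.sub_apply, Pi.smul_apply, Pi.one_apply, smul_eq_mul]
  ring

lemma clamp_one {M : ℝ≥0∞} (hM : 1 < M) {v : ℝ} (h0 : 0 < v) (h1 : ENNReal.ofReal v < M) :
    (min (ENNReal.ofReal v) M).toReal = v := by
  rw [min_eq_left h1.le, ENNReal.toReal_ofReal h0.le]

lemma clamp_zero {M : ℝ≥0∞} {v : ℝ} (h0 : v < 0) :
    (min (ENNReal.ofReal v) M).toReal = 0 := by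
  rw [ENNReal.ofReal_of_nonpos h0.le, min_eq_left zero_le, ENNReal.toReal_zero]

lemma fixed_pt (W : Matrix (Fin n) (Fin n) ℝ) (m : Fin n → ℝ≥0∞) (hm : ∀ i, 1 < m i)
    (σ : Fin n → ℝ) (hσ : ∀ i, σ i = 0 ∨ σ i = 1) :
    σ = clamp m (W.mulVec σ + (((2 : ℝ) • (1 : Matrix (Fin n) (Fin n) ℝ) - W).mulVec σ - 1)) := by
  funext i
  rw [clamp, val_eq]
  rcases hσ i with h | h <;> rw [h]
  · rw [show (2 * (0:ℝ) - 1) = -1 by norm_num]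
    exact (clamp_zero (by norm_num)).symm
  · rw [show (2 * (1:ℝ) - 1) = 1 by norm_num]
    refine (clamp_one (hm i) one_pos ?_).symm
    rw [ENNReal.ofReal_one]; exact hm i

end Aux

section Region
variable {n : ℕ}

lemma exists_c (m : Fin n → ℝ≥0∞) (hm : ∀ i, 1 < m i) :
    ∃ c : ℝ, 0 < c ∧ c ≤ 1 ∧ ∀ i, ENNReal.ofReal (1 + c) < m i := by
  have h : ∀ i : Fin n, ∃ c : ℝ, 0 < c ∧ c ≤ 1 ∧ ENNReal.ofReal (1 + c) < m i := by
    intro i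
    rcases eq_or_ne (m i) ⊤ with h | h
    · exact ⟨1, one_pos, le_refl _, h ▸ ENNReal.ofReal_lt_top⟩
    · have h1 : 1 < (m i).toReal := by
        have := (ENNReal.toReal_lt_toReal (by simp) h).mpr (hm i)
        simpa using this
      have hmin : 0 < min ((m i).toReal - 1) 1 := lt_min (by linarith) one_pos
      refine ⟨min ((m i).toReal - 1) 1 / 2, by positivity, by
        nlinarith [min_le_right ((m i).toReal - 1) 1], ?_⟩
      rw [ENNReal.ofReal_lt_iff_lt_toReal (by positivity) h]
      nlinarith [min_le_left ((m i).toReal - 1) 1]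
  choose cc h1 h2 h3 using h
  rcases isEmpty_or_nonempty (Fin n) with hE | hE
  · exact ⟨1, one_pos, le_refl _, fun i => (hE.elim i)⟩
  · have hne : (Finset.univ : Finset (Fin n)).Nonempty := Finset.univ_nonempty
    refine ⟨Finset.univ.inf' hne cc, ?_, ?_, fun i => ?_⟩
    · rw [Finset.lt_inf'_iff]; exact fun i _ => h1 i
    · obtain ⟨i⟩ := hE
      exact le_trans (Finset.inf'_le cc (Finset.mem_univ i)) (h2 i)
    · refine lt_of_le_of_lt ?_ (h3 i)
      exact ENNReal.ofReal_le_ofReal (by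
        have := Finset.inf'_le cc (Finset.mem_univ i); linarith)

lemma exists_KW (W : Matrix (Fin n) (Fin n) ℝ) :
    ∃ K : ℝ, 0 ≤ K ∧ ∀ z : Fin n → ℝ, ∀ i, |(W.mulVec z) i| ≤ K * ‖z‖ := by
  set T := LinearMap.toContinuousLinearMap (W.mulVecLin) with hT
  refine ⟨‖T‖, norm_nonneg _, fun z i => ?_⟩
  have h1 : |(W.mulVec z) i| ≤ ‖W.mulVec z‖ := by
    simpa [Real.norm_eq_abs] using norm_le_pi_norm (W.mulVec z) i
  have h2 : W.mulVec z = T z := by simp [hT]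
  rw [h2] at h1
  exact h1.trans (T.le_opNorm z)

lemma val_shift (W : Matrix (Fin n) (Fin n) ℝ) (σ y : Fin n → ℝ) (i : Fin n) :
    (W.mulVec y + (((2 : ℝ) • (1 : Matrix (Fin n) (Fin n) ℝ) - W).mulVec σ - 1)) i
      = (W.mulVec (y - σ)) i + 2 * σ i - 1 := by
  simp only [Matrix.sub_mulVec, Matrix.smul_mulVec, Matrix.one_mulVec, Matrix.mulVec_sub,
    Pi.add_apply, Pi.sub_apply, Pi.smul_apply, Pi.one_apply, smul_eq_mul]
  ring

lemma lin_id (W : Matrix (Fin n) (Fin n) ℝ) (σ : Fin n → ℝ) (hσ : ∀ i, σ i = 0 ∨ σ i = 1)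
    (y : Fin n → ℝ) (i : Fin n) :
    -(y i) + σ i * ((W.mulVec y + (((2 : ℝ) • (1 : Matrix (Fin n) (Fin n) ℝ) - W).mulVec σ - 1)) i)
      = ((-1 + Matrix.diagonal σ * W).mulVec (y - σ)) i := by
  rw [val_shift]
  have hR : ((-1 + Matrix.diagonal σ * W).mulVec (y - σ)) i
      = -((y - σ) i) + σ i * (W.mulVec (y - σ)) i := by
    have hD : ((Matrix.diagonal σ * W).mulVec (y - σ)) i = σ i * (W.mulVec (y - σ)) i := by
      rw [← Matrix.mulVec_mulVec]
      exact Matrix.mulVec_diagonal σ (W.mulVec (y - σ)) i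
    rw [Matrix.add_mulVec, Matrix.neg_mulVec, Matrix.one_mulVec, Pi.add_apply, Pi.neg_apply, hD]
  rw [hR]
  simp only [Pi.sub_apply]
  rcases hσ i with h | h <;> rw [h] <;> ring

lemma region (W : Matrix (Fin n) (Fin n) ℝ) (m : Fin n → ℝ≥0∞) (hm : ∀ i, 1 < m i)
    (σ : Fin n → ℝ) (hσ : ∀ i, σ i = 0 ∨ σ i = 1) :
    ∃ r : ℝ, 0 < r ∧ ∀ y : Fin n → ℝ, ‖y - σ‖ < r → ∀ i,
      clamp m (W.mulVec y + (((2 : ℝ) • (1 : Matrix (Fin n) (Fin n) ℝ) - W).mulVec σ - 1)) i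
        = σ i * ((W.mulVec y + (((2 : ℝ) • (1 : Matrix (Fin n) (Fin n) ℝ) - W).mulVec σ - 1)) i) := by
  obtain ⟨c, hc0, hc1, hc⟩ := exists_c m hm
  obtain ⟨K, hK0, hK⟩ := exists_KW W
  refine ⟨c / (K + 1), by positivity, fun y hy i => ?_⟩
  have hWz : |(W.mulVec (y - σ)) i| < c := by
    have h1 := hK (y - σ) i
    have h2 : K * ‖y - σ‖ < c := by
      have hKK : K / (K+1) < 1 := by
        rw [div_lt_one (by positivity)]; linarith
      calc K * ‖y - σ‖ ≤ K * (c / (K+1)) := by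
            apply mul_le_mul_of_nonneg_left hy.le hK0
        _ = c * (K / (K+1)) := by ring
        _ < c * 1 := by apply mul_lt_mul_of_pos_left hKK hc0
        _ = c := mul_one c
    linarith
  have habs := abs_lt.mp hWz
  rcases hσ i with h | h
  · rw [clamp, val_shift, h]
    have hv : (W.mulVec (y - σ)) i + 2 * 0 - 1 < 0 := by linarith
    rw [clamp_zero hv, zero_mul]
  · rw [clamp, val_shift, h]
    have hv0 : 0 < (W.mulVec (y - σ)) i + 2 * 1 - 1 := by linarith
    have hv1 : ENNReal.ofReal ((W.mulVec (y - σ)) i + 2 * 1 - 1) < m i := by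
      refine lt_of_le_of_lt (ENNReal.ofReal_le_ofReal (by linarith)) (hc i)
    rw [clamp_one (hm i) hv0 hv1, one_mul]

end Region


section Glob
variable {E : Type*} [NormedAddCommGroup E] [NormedSpace ℝ E] [CompleteSpace E]

/-- local solvability on an interval of length ≤ h for globally Lipschitz autonomous f -/
lemma loc_sol (f : E → E) (L : ℝ≥0) (hf : LipschitzWith L f)
    (a b : ℝ) (hab : a ≤ b) (hba : b - a ≤ 1 / (2 * ((L:ℝ) + 1)))
    (t₀ : ℝ) (ht₀ : t₀ ∈ Icc a b) (c : E) :
    ∃ g : ℝ → E, g t₀ = c ∧ ∀ t ∈ Icc a b, HasDerivWithinAt g (f (g t)) (Icc a b) t := by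
  set Lr : ℝ := (L : ℝ) with hLr
  have hLr0 : 0 ≤ Lr := L.coe_nonneg
  set h : ℝ := 1 / (2 * (Lr + 1)) with hh
  have hh0 : 0 < h := by positivity
  have growth : ∀ x : E, ‖f x‖ ≤ Lr * ‖x‖ + ‖f 0‖ := by
    intro x
    have h1 := hf.dist_le_mul x 0
    rw [dist_eq_norm, dist_eq_norm, sub_zero] at h1
    have he : f x - f 0 + f 0 = f x := by abel
    calc ‖f x‖ = ‖(f x - f 0) + f 0‖ := by rw [he]
      _ ≤ ‖f x - f 0‖ + ‖f 0‖ := norm_add_le _ _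
      _ ≤ Lr * ‖x‖ + ‖f 0‖ := by exact add_le_add_left h1 _
  set R : ℝ := 2 * h * (Lr * ‖c‖ + ‖f 0‖ + 1) with hR
  have hR0 : 0 ≤ R := by positivity
  set C : ℝ := Lr * (‖c‖ + R) + ‖f 0‖ with hC
  have hC0 : 0 ≤ C := by positivity
  have hpl : IsPicardLindelof (fun _ => f) (tmin := a) (tmax := b) ⟨t₀, ht₀⟩ c ⟨R, hR0⟩ 0
      ⟨C, hC0⟩ L := by
    apply IsPicardLindelof.of_time_independent
    · intro x hx
      show ‖f x‖ ≤ C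
      have h2 : ‖x‖ ≤ ‖c‖ + R := by
        have h3 : ‖x - c‖ ≤ R := mem_closedBall_iff_norm.mp hx
        have he : x - c + c = x := by abel
        calc ‖x‖ = ‖(x - c) + c‖ := by rw [he]
          _ ≤ ‖x - c‖ + ‖c‖ := norm_add_le _ _
          _ ≤ R + ‖c‖ := add_le_add_left h3 _
          _ = ‖c‖ + R := by ring
      calc ‖f x‖ ≤ Lr * ‖x‖ + ‖f 0‖ := growth x
        _ ≤ Lr * (‖c‖ + R) + ‖f 0‖ := by nlinarith
    · exact hf.lipschitzOnWith
    · have hmax : max (b - t₀) (t₀ - a) ≤ h :=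
        max_le (by linarith [ht₀.1]) (by linarith [ht₀.2])
      have hhL : h * (Lr + 1) = 1 / 2 := by
        rw [hh]; field_simp
      have hfin : C * max (b - t₀) (t₀ - a) ≤ R :=
        calc C * max (b - t₀) (t₀ - a) ≤ C * h := mul_le_mul_of_nonneg_left hmax hC0
          _ ≤ R := by nlinarith [mul_nonneg hLr0 hR0]
      simp only [NNReal.coe_zero, sub_zero]
      exact hfin
  obtain ⟨g, hg0, hg⟩ := hpl.exists_eq_forall_mem_Icc_hasDerivWithinAt₀
  exact ⟨g, hg0, hg⟩

theorem global_sol (f : E → E) (L : ℝ≥0) (hf : LipschitzWith L f) (x₀ : E) :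
    ∃ x : ℝ → E, x 0 = x₀ ∧ ∀ t, 0 ≤ t → HasDerivAt x (f (x t)) t := by
  set h : ℝ := 1 / (2 * ((L : ℝ) + 1)) with hh
  have hh0 : 0 < h := by positivity
  -- forward pieces
  have locF : ∀ (k : ℕ) (c : E), ∃ g : ℝ → E, g ((k : ℝ) * h) = c ∧
      ∀ t ∈ Icc ((k : ℝ) * h) (((k : ℝ) + 1) * h),
        HasDerivWithinAt g (f (g t)) (Icc ((k : ℝ) * h) (((k : ℝ) + 1) * h)) t := by
    intro k c
    refine loc_sol f L hf _ _ (by nlinarith [Nat.cast_nonneg (α := ℝ) k])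
      (le_of_eq (by rw [hh]; ring)) _ ⟨le_refl _, by nlinarith⟩ c
  choose G hG1 hG2 using locF
  -- backward piece
  obtain ⟨gneg, hgneg0, hgneg⟩ := loc_sol f L hf (-h) 0 (by linarith) (le_of_eq (by rw [hh]; ring)) 0
    ⟨by linarith, le_refl 0⟩ x₀
  -- recursively chained forward pieces
  obtain ⟨q, hq0, hqs⟩ : ∃ q : ℕ → ℝ → E, q 0 = G 0 x₀ ∧
      ∀ k, q (k + 1) = G (k + 1) (q k (((k : ℝ) + 1) * h)) :=
    ⟨fun k => Nat.rec (G 0 x₀) (fun k qk => G (k + 1) (qk (((k : ℝ) + 1) * h))) k, rfl, fun _ => rfl⟩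
  have hq0v : q 0 0 = x₀ := by
    rw [hq0]
    have := hG1 0 x₀
    simpa using this
  have hqsv : ∀ k : ℕ, q (k + 1) (((k : ℝ) + 1) * h) = q k (((k : ℝ) + 1) * h) := by
    intro k
    rw [hqs k]
    have := hG1 (k + 1) (q k (((k : ℝ) + 1) * h))
    rwa [Nat.cast_add, Nat.cast_one] at this
  have hqD : ∀ k : ℕ, ∀ t ∈ Icc ((k : ℝ) * h) (((k : ℝ) + 1) * h),
      HasDerivWithinAt (q k) (f (q k t)) (Icc ((k : ℝ) * h) (((k : ℝ) + 1) * h)) t := by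
    intro k
    cases k with
    | zero => rw [hq0]; exact hG2 0 x₀
    | succ j =>
        rw [hqs j]
        push_cast
        exact_mod_cast hG2 (j + 1) (q j (((j : ℝ) + 1) * h))
  -- the glued global function
  set x : ℝ → E := fun t => if t ≤ 0 then gneg t else q (⌈t / h⌉₊ - 1) t with hx
  have hxneg : ∀ t : ℝ, t ≤ 0 → x t = gneg t := fun t ht => if_pos ht
  have hx0 : x 0 = x₀ := by rw [hxneg 0 (le_refl 0), hgneg0]
  -- agreement of x with piece k on its interval
  have F4 : ∀ k : ℕ, ∀ t ∈ Icc ((k : ℝ) * h) (((k : ℝ) + 1) * h), x t = q k t := by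
    intro k t ht
    rcases eq_or_lt_of_le ht.1 with heq | hlt
    · -- t = k*h
      cases k with
      | zero =>
          have ht0 : t = 0 := by simpa using heq.symm
          rw [ht0, hx0, hq0v]
      | succ j =>
          have htv : t = ((j : ℝ) + 1) * h := by
            rw [← heq]; push_cast; ring
          have ht0 : ¬ t ≤ 0 := by
            rw [htv]; push_neg; positivity
          have hceil : ⌈t / h⌉₊ = j + 1 := by
            rw [htv, mul_div_assoc, div_self hh0.ne', mul_one]
            rw [show ((j : ℝ) + 1) = ((j + 1 : ℕ) : ℝ) by push_cast; ring, Nat.ceil_natCast]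
          rw [hx]
          simp only [if_neg ht0, hceil, Nat.add_sub_cancel]
          rw [htv, hqsv j]
    · -- k*h < t
      have ht0 : ¬ t ≤ 0 := by
        push_neg
        calc (0:ℝ) ≤ (k : ℝ) * h := by positivity
          _ < t := hlt
      have hceil : ⌈t / h⌉₊ = k + 1 := by
        rw [Nat.ceil_eq_iff (Nat.succ_ne_zero k)]
        constructor
        · simpa using (lt_div_iff₀ hh0).mpr (by simpa using hlt)
        · rw [div_le_iff₀ hh0]; push_cast; linarith [ht.2]
      rw [hx]
      simp only [if_neg ht0, hceil, Nat.add_sub_cancel]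
  refine ⟨x, hx0, ?_⟩
  intro t ht
  obtain ⟨k, hk1, hk2⟩ : ∃ k : ℕ, (k : ℝ) * h ≤ t ∧ t < ((k : ℝ) + 1) * h := by
    refine ⟨⌊t / h⌋₊, ?_, ?_⟩
    · have := Nat.floor_le (div_nonneg ht hh0.le)
      calc (⌊t / h⌋₊ : ℝ) * h ≤ (t / h) * h := by nlinarith
        _ = t := by field_simp
    · have := Nat.lt_floor_add_one (t / h)
      calc t = (t / h) * h := by field_simp
        _ < ((⌊t / h⌋₊ : ℝ) + 1) * h := by nlinarith
  rcases eq_or_lt_of_le hk1 with heq | hlt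
  · -- junction point t = k*h
    cases k with
    | zero =>
        have ht0 : t = 0 := by simpa using heq.symm
        subst ht0
        -- left derivative from gneg
        have hL : HasDerivWithinAt x (f (x 0)) (Iic 0) 0 := by
          have h1 := hgneg 0 ⟨by linarith, le_refl 0⟩
          have h2 : HasDerivWithinAt gneg (f (gneg 0)) (Iic 0) 0 :=
            h1.mono_of_mem_nhdsWithin (Icc_mem_nhdsLE_of_mem ⟨by linarith, le_refl 0⟩)
          have h3 : x =ᶠ[nhdsWithin 0 (Iic 0)] gneg :=
            Filter.eventuallyEq_of_mem self_mem_nhdsWithin (fun s hs => hxneg s hs)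
          have h4 := h2.congr_of_eventuallyEq h3 (hxneg 0 (le_refl 0))
          rwa [hxneg 0 (le_refl 0)]
        have hR : HasDerivWithinAt x (f (x 0)) (Ici 0) 0 := by
          have h1 := hqD 0 0 ⟨by simp, by simpa using hh0.le⟩
          have h2 : HasDerivWithinAt (q 0) (f (q 0 0)) (Ici 0) 0 :=
            h1.mono_of_mem_nhdsWithin (Icc_mem_nhdsGE_of_mem ⟨by simp, by simpa using hh0⟩)
          have h3 : x =ᶠ[nhdsWithin 0 (Ici 0)] q 0 :=
            Filter.eventuallyEq_of_mem (Icc_mem_nhdsGE_of_mem ⟨by simp, by simpa using hh0⟩)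
              (fun s hs => F4 0 s hs)
          have h4 := h2.congr_of_eventuallyEq h3 (by rw [hx0, hq0v])
          rw [hx0, ← hq0v]
          exact h4
        have := hL.union hR
        rwa [Iic_union_Ici, hasDerivWithinAt_univ] at this
    | succ j =>
        have htv : t = ((j : ℝ) + 1) * h := by rw [← heq]; push_cast; ring
        have hxt : x t = q j t := F4 j t ⟨by rw [htv]; nlinarith [Nat.cast_nonneg (α := ℝ) j], htv.le⟩
        have hL : HasDerivWithinAt x (f (x t)) (Iic t) t := by
          have h1 := hqD j t ⟨by rw [htv]; nlinarith [Nat.cast_nonneg (α := ℝ) j], htv.le⟩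
          have hmem : Icc ((j : ℝ) * h) (((j : ℝ) + 1) * h) ∈ nhdsWithin t (Iic t) :=
            Icc_mem_nhdsLE_of_mem ⟨by rw [htv]; nlinarith [Nat.cast_nonneg (α := ℝ) j], htv.le⟩
          have h2 := h1.mono_of_mem_nhdsWithin hmem
          have h3 : x =ᶠ[nhdsWithin t (Iic t)] q j :=
            Filter.eventuallyEq_of_mem hmem (fun s hs => F4 j s hs)
          have h4 := h2.congr_of_eventuallyEq h3 hxt
          rwa [hxt]
        have hR : HasDerivWithinAt x (f (x t)) (Ici t) t := by
          have hmem2 : t ∈ Icc (((j : ℝ) + 1) * h) ((((j : ℝ) + 1) + 1) * h) := by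
            constructor
            · exact htv.ge
            · rw [htv]; nlinarith
          have hmem2' : t ∈ Icc (((j + 1 : ℕ) : ℝ) * h) ((((j + 1 : ℕ) : ℝ) + 1) * h) := by
            push_cast; exact hmem2
          have h1 := hqD (j + 1) t hmem2'
          have hmem : Icc (((j + 1 : ℕ) : ℝ) * h) ((((j + 1 : ℕ) : ℝ) + 1) * h) ∈ nhdsWithin t (Ici t) := by
            refine Icc_mem_nhdsGE_of_mem ⟨hmem2'.1, ?_⟩
            push_cast
            rw [htv]; nlinarith
          have h2 := h1.mono_of_mem_nhdsWithin hmem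
          have hxt2 : x t = q (j + 1) t := F4 (j + 1) t hmem2'
          have h3 : x =ᶠ[nhdsWithin t (Ici t)] q (j + 1) :=
            Filter.eventuallyEq_of_mem hmem (fun s hs => F4 (j + 1) s hs)
          have h4 := h2.congr_of_eventuallyEq h3 hxt2
          rwa [← hxt2] at h4
        have := hL.union hR
        rwa [Iic_union_Ici, hasDerivWithinAt_univ] at this
  · -- interior point
    have h1 := hqD k t ⟨hk1, hk2.le⟩
    have h2 : HasDerivAt (q k) (f (q k t)) t :=
      h1.hasDerivAt (Icc_mem_nhds hlt hk2)
    have h3 : x =ᶠ[nhds t] q k :=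
      Filter.eventuallyEq_of_mem (Ioo_mem_nhds hlt hk2)
        (fun s hs => F4 k s ⟨hs.1.le, hs.2.le⟩)
    have h4 := h2.congr_of_eventuallyEq h3
    rwa [F4 k t ⟨hk1, hk2.le⟩]

end Glob

section Lip
variable {n : ℕ}

lemma min_lip (a b c : ℝ) : |min a c - min b c| ≤ |a - b| := by
  have h3 := neg_abs_le (a - b)
  have h4 := le_abs_self (a - b)
  have h5 := abs_nonneg (a - b)
  rcases le_total a c with h1 | h1 <;> rcases le_total b c with h2 | h2 <;>
    rw [abs_le] <;> constructor <;>
    simp [min_eq_left, min_eq_right, h1, h2] <;> linarith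

lemma toReal_ofReal_max (a : ℝ) : (ENNReal.ofReal a).toReal = max a 0 := by
  rcases le_total a 0 with h | h
  · rw [ENNReal.ofReal_of_nonpos h, ENNReal.toReal_zero, max_eq_right h]
  · rw [ENNReal.toReal_ofReal h, max_eq_left h]

lemma clamp_comp_lip (M : ℝ≥0∞) (a b : ℝ) :
    |(min (ENNReal.ofReal a) M).toReal - (min (ENNReal.ofReal b) M).toReal| ≤ |a - b| := by
  rcases eq_or_ne M ⊤ with h | h
  · subst h
    rw [min_eq_left le_top, min_eq_left le_top, toReal_ofReal_max, toReal_ofReal_max]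
    exact abs_max_sub_max_le_abs a b 0
  · rw [ENNReal.toReal_min ENNReal.ofReal_ne_top h, ENNReal.toReal_min ENNReal.ofReal_ne_top h,
      toReal_ofReal_max, toReal_ofReal_max]
    exact (min_lip _ _ _).trans (abs_max_sub_max_le_abs a b 0)

lemma clamp_lipschitz (m : Fin n → ℝ≥0∞) : LipschitzWith 1 (clamp m) := by
  refine LipschitzWith.of_dist_le_mul fun y z => ?_
  rw [NNReal.coe_one, one_mul]
  refine (dist_pi_le_iff dist_nonneg).mpr fun i => ?_
  rw [Real.dist_eq]
  calc |clamp m y i - clamp m z i| ≤ |y i - z i| := clamp_comp_lip (m i) (y i) (z i)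
    _ = dist (y i) (z i) := (Real.dist_eq _ _).symm
    _ ≤ dist y z := dist_le_pi_dist y z i

lemma f_lipschitz (τ : ℝ) (W : Matrix (Fin n) (Fin n) ℝ) (m : Fin n → ℝ≥0∞) (d : Fin n → ℝ) :
    ∃ L : ℝ≥0, LipschitzWith L (fun y : Fin n → ℝ => τ⁻¹ • (-y + clamp m (W.mulVec y + d))) := by
  set T := LinearMap.toContinuousLinearMap (W.mulVecLin) with hT
  refine ⟨‖τ⁻¹‖₊ * (1 + ‖T‖₊), LipschitzWith.of_dist_le_mul fun y z => ?_⟩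
  have hclamp := (clamp_lipschitz m).dist_le_mul (W.mulVec y + d) (W.mulVec z + d)
  rw [NNReal.coe_one, one_mul] at hclamp
  have hWd : dist (W.mulVec y + d) (W.mulVec z + d) ≤ ‖T‖ * dist y z := by
    rw [dist_eq_norm]
    have he : (W.mulVec y + d) - (W.mulVec z + d) = T (y - z) := by
      simp only [hT, LinearMap.coe_toContinuousLinearMap', Matrix.mulVecLin_apply,
        Matrix.mulVec_sub]
      abel
    rw [he, dist_eq_norm]
    exact T.le_opNorm (y - z)
  rw [dist_smul₀]
  have h2 : dist (-y + clamp m (W.mulVec y + d)) (-z + clamp m (W.mulVec z + d))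
      ≤ dist y z + ‖T‖ * dist y z := by
    calc dist (-y + clamp m (W.mulVec y + d)) (-z + clamp m (W.mulVec z + d))
        ≤ dist (-y) (-z) + dist (clamp m (W.mulVec y + d)) (clamp m (W.mulVec z + d)) :=
          dist_add_add_le _ _ _ _
      _ ≤ dist y z + ‖T‖ * dist y z := by
          rw [dist_neg_neg]
          exact add_le_add_right (hclamp.trans hWd) _
  have hcoe : ((‖τ⁻¹‖₊ * (1 + ‖T‖₊) : ℝ≥0) : ℝ) = ‖τ⁻¹‖ * (1 + ‖T‖) := by push_cast; ring
  rw [hcoe]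
  have h3 : (0:ℝ) ≤ ‖τ⁻¹‖ := norm_nonneg _
  nlinarith [dist_nonneg (x := y) (y := z)]

end Lip

section Key
variable {n : ℕ}

lemma key_hurwitz (τ : ℝ) (hτ : 0 < τ) (W : Matrix (Fin n) (Fin n) ℝ)
    (m : Fin n → ℝ≥0∞) (hm : ∀ i, 1 < m i)
    (σ : Fin n → ℝ) (hσ : ∀ i, σ i = 0 ∨ σ i = 1)
    (hst : ∃ xs : Fin n → ℝ,
      xs = clamp m (W.mulVec xs + (((2 : ℝ) • (1 : Matrix (Fin n) (Fin n) ℝ) - W).mulVec σ - 1)) ∧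
      (∀ y : Fin n → ℝ, y = clamp m (W.mulVec y + (((2 : ℝ) • (1 : Matrix (Fin n) (Fin n) ℝ) - W).mulVec σ - 1)) → y = xs) ∧
      (∀ ε > (0 : ℝ), ∃ δ > (0 : ℝ), ∀ x : ℝ → (Fin n → ℝ),
        (∀ t, 0 ≤ t → HasDerivAt x (τ⁻¹ • (-(x t) + clamp m (W.mulVec (x t) + (((2 : ℝ) • (1 : Matrix (Fin n) (Fin n) ℝ) - W).mulVec σ - 1)))) t) →
        ‖x 0 - xs‖ < δ → ∀ t, 0 ≤ t → ‖x t - xs‖ < ε) ∧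
      (∃ δ₀ > (0 : ℝ), ∀ x : ℝ → (Fin n → ℝ),
        (∀ t, 0 ≤ t → HasDerivAt x (τ⁻¹ • (-(x t) + clamp m (W.mulVec (x t) + (((2 : ℝ) • (1 : Matrix (Fin n) (Fin n) ℝ) - W).mulVec σ - 1)))) t) →
        ‖x 0 - xs‖ < δ₀ → Filter.Tendsto x Filter.atTop (nhds xs)))
    (μ : ℂ) (u : Fin n → ℂ) (hu : u ≠ 0)
    (huM : Matrix.vecMul u ((-1 + Matrix.diagonal σ * W).map (fun x : ℝ => (x : ℂ))) = μ • u)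
    (hre : 0 ≤ μ.re) : False := by
  classical
  obtain ⟨xs, hfix, huniq, hLyap, hattr⟩ := hst
  have hxs : σ = xs := huniq σ (fixed_pt W m hm σ hσ)
  subst hxs
  obtain ⟨r, hr0, hreg⟩ := region W m hm σ hσ
  obtain ⟨δ, hδ0, hS⟩ := hLyap r hr0
  obtain ⟨δ₀, hδ₀0, hA⟩ := hattr
  obtain ⟨j, hj⟩ : ∃ j, u j ≠ 0 := by
    by_contra hcon; push_neg at hcon; exact hu (funext hcon)
  have hmin0 : 0 < min δ δ₀ := lt_min hδ0 hδ₀0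
  set c : ℝ := min δ δ₀ / 2 with hc
  have hc0 : 0 < c := by positivity
  obtain ⟨L, hL⟩ := f_lipschitz τ W m (((2 : ℝ) • (1 : Matrix (Fin n) (Fin n) ℝ) - W).mulVec σ - 1)
  obtain ⟨x, hx0, hxD⟩ := global_sol _ L hL (σ + Pi.single j c)
  have hnorm0 : ‖x 0 - σ‖ = c := by
    rw [hx0, add_sub_cancel_left, Pi.norm_single, Real.norm_of_nonneg hc0.le]
  have htrap : ∀ t, 0 ≤ t → ‖x t - σ‖ < r :=
    hS x hxD (by rw [hnorm0]; rw [hc]; linarith [min_le_left δ δ₀])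
  have htends : Filter.Tendsto x Filter.atTop (nhds σ) :=
    hA x hxD (by rw [hnorm0]; rw [hc]; linarith [min_le_right δ δ₀])
  set μ' : ℂ := ((τ⁻¹ : ℝ) : ℂ) * μ with hμ'
  have hμ're : 0 ≤ μ'.re := by
    rw [hμ']
    simp only [Complex.mul_re, Complex.ofReal_re, Complex.ofReal_im, zero_mul, sub_zero]
    exact mul_nonneg (inv_nonneg.mpr hτ.le) hre
  set hf : (Fin n → ℝ) → ℂ := fun y => ∑ i, u i * ((y i : ℂ) - (σ i : ℂ)) with hhf
  have hfcont : Continuous hf := by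
    apply continuous_finset_sum
    intro i _
    exact continuous_const.mul ((Complex.continuous_ofReal.comp (continuous_apply i)).sub
      continuous_const)
  set M : Matrix (Fin n) (Fin n) ℝ := -1 + Matrix.diagonal σ * W with hM
  have hderiv : ∀ t, 0 ≤ t → HasDerivAt (fun s => hf (x s)) (μ' * hf (x t)) t := by
    intro t ht
    have hx' := hxD t ht
    set d : Fin n → ℝ := ((2 : ℝ) • (1 : Matrix (Fin n) (Fin n) ℝ) - W).mulVec σ - 1 with hd
    set v : Fin n → ℝ := τ⁻¹ • (-(x t) + clamp m (W.mulVec (x t) + d)) with hv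
    have hxi : ∀ i, HasDerivAt (fun s => x s i) (v i) t := fun i => (hasDerivAt_pi.mp hx') i
    have hsumD : HasDerivAt (fun s => hf (x s)) (∑ i, u i * ((v i : ℝ) : ℂ)) t := by
      refine HasDerivAt.fun_sum fun i _ => ?_
      have h1 : HasDerivAt (fun s => ((x s i : ℝ) : ℂ)) ((v i : ℂ)) t := by
        exact (hxi i).ofReal_comp
      exact (h1.sub_const _).const_mul (u i)
    have hvi : ∀ i, v i = τ⁻¹ * ((M.mulVec (x t - σ)) i) := by
      intro i
      rw [hv]
      simp only [Pi.smul_apply, smul_eq_mul, Pi.add_apply, Pi.neg_apply]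
      rw [hreg (x t) (htrap t ht) i]
      rw [hM, ← lin_id W σ hσ (x t) i]
    have hval : ∑ i, u i * ((v i : ℝ) : ℂ) = μ' * hf (x t) := by
      set zc : Fin n → ℂ := fun k => ((x t k : ℂ) - (σ k : ℂ)) with hzc
      have hcast : ∀ i, (((M.mulVec (x t - σ)) i : ℝ) : ℂ)
          = ((M.map (fun x : ℝ => (x : ℂ))).mulVec zc) i := by
        intro i
        simp only [Matrix.mulVec, dotProduct, Matrix.map_apply, hzc, Pi.sub_apply]
        push_cast
        ring
      calc ∑ i, u i * ((v i : ℝ) : ℂ)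
          = ((τ⁻¹ : ℝ) : ℂ) * ∑ i, u i * (((M.map (fun x : ℝ => (x : ℂ))).mulVec zc) i) := by
            rw [Finset.mul_sum]
            refine Finset.sum_congr rfl fun i _ => ?_
            rw [hvi i, ← hcast i]
            push_cast
            ring
        _ = ((τ⁻¹ : ℝ) : ℂ) * (dotProduct u ((M.map (fun x : ℝ => (x : ℂ))).mulVec zc)) := rfl
        _ = ((τ⁻¹ : ℝ) : ℂ) * (dotProduct (Matrix.vecMul u (M.map (fun x : ℝ => (x : ℂ)))) zc) := by
            rw [Matrix.dotProduct_mulVec]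
        _ = ((τ⁻¹ : ℝ) : ℂ) * (dotProduct (μ • u) zc) := by rw [huM]
        _ = ((τ⁻¹ : ℝ) : ℂ) * (μ * dotProduct u zc) := by
            rw [smul_dotProduct]; rfl
        _ = μ' * hf (x t) := by
            have hdp : dotProduct u zc = hf (x t) := rfl
            rw [hμ', hdp]; ring
    rwa [hval] at hsumD
  have hsol : ∀ t, 0 ≤ t → hf (x t) = Complex.exp (μ' * t) * hf (x 0) := by
    intro t ht
    set Hf : ℝ → ℂ := fun s => Complex.exp (-μ' * s) * hf (x s) with hHf
    have hHd : ∀ s, 0 ≤ s → HasDerivAt Hf 0 s := by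
      intro s hs
      have h1 : HasDerivAt (fun s : ℝ => ((s : ℝ) : ℂ)) 1 s := by
        simpa using (hasDerivAt_id s).ofReal_comp
      have h2 := h1.const_mul (-μ')
      rw [mul_one] at h2
      have hE := h2.cexp
      have h3 := hE.mul (hderiv s hs)
      have h4 : Complex.exp (-μ' * (s:ℂ)) * -μ' * hf (x s)
          + Complex.exp (-μ' * (s:ℂ)) * (μ' * hf (x s)) = 0 := by ring
      rw [h4] at h3
      exact h3
    have hconst := constant_of_has_deriv_right_zero (f := Hf) (a := 0) (b := t)
      (fun s hs => (hHd s hs.1).continuousAt.continuousWithinAt)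
      (fun s hs => (hHd s hs.1).hasDerivWithinAt)
    have h5 := hconst t ⟨ht, le_refl t⟩
    have h6 : Hf 0 = hf (x 0) := by
      rw [hHf]
      simp
    rw [h6] at h5
    rw [← h5, hHf]
    have h7 : Complex.exp (μ' * t) * (Complex.exp (-μ' * (t:ℂ)) * hf (x t)) = hf (x t) := by
      rw [← mul_assoc, ← Complex.exp_add]
      ring_nf
      simp
    rw [h7]
  have hne : hf (x 0) ≠ 0 := by
    have hsum : hf (x 0) = u j * (c : ℂ) := by
      rw [hx0]
      simp only [hhf]
      rw [Finset.sum_eq_single j]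
      · have hj1 : (σ + Pi.single j c : Fin n → ℝ) j = σ j + c := by simp [Pi.single_eq_same]
        rw [hj1]; push_cast; ring
      · intro b _ hb
        have hb1 : (σ + Pi.single j c : Fin n → ℝ) b = σ b := by simp [Pi.single_eq_of_ne hb]
        rw [hb1]; simp
      · intro hb; exact absurd (Finset.mem_univ j) hb
    rw [hsum]
    exact mul_ne_zero hj (by exact_mod_cast hc0.ne')
  have h8 : Filter.Tendsto (fun t => hf (x t)) Filter.atTop (nhds 0) := by
    have h9 := (hfcont.tendsto σ).comp htends
    have h10 : hf σ = 0 := by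
      rw [hhf]; simp
    rw [h10] at h9
    exact h9
  have h9 : ∀ᶠ t in Filter.atTop, ‖hf (x t)‖ < ‖hf (x 0)‖ := by
    have h10 : Filter.Tendsto (fun t => ‖hf (x t)‖) Filter.atTop (nhds 0) := by
      simpa using h8.norm
    exact h10.eventually_lt_const (norm_pos_iff.mpr hne)
  obtain ⟨t, hlt, ht0⟩ := (h9.and (Filter.eventually_ge_atTop (0:ℝ))).exists
  have h11 : ‖hf (x 0)‖ ≤ ‖hf (x t)‖ := by
    rw [hsol t ht0, norm_mul]
    rw [Complex.norm_exp]
    have h12 : 0 ≤ (μ' * (t:ℂ)).re := by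
      simp only [Complex.mul_re, Complex.ofReal_re, Complex.ofReal_im, mul_zero, sub_zero]
      exact mul_nonneg hμ're ht0
    nlinarith [Real.one_le_exp h12, norm_nonneg (hf (x 0))]
  exact absurd h11 (not_le.mpr hlt)

end Key

section Eig

lemma left_eig {k : Type*} [Fintype k] [DecidableEq k] (B : Matrix k k ℂ) (μ : ℂ)
    (h : Module.End.HasEigenvalue (Matrix.toLin' B) μ) :
    ∃ w : k → ℂ, w ≠ 0 ∧ Matrix.vecMul w B = μ • w := by
  obtain ⟨v, hv⟩ := h.exists_hasEigenvector
  have hv1 : B.mulVec v = μ • v := by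
    rw [← Matrix.toLin'_apply]; exact hv.apply_eq_smul
  have hdet : (B - μ • 1).det = 0 := by
    rw [← Matrix.exists_mulVec_eq_zero_iff]
    refine ⟨v, hv.2, ?_⟩
    rw [Matrix.sub_mulVec, hv1, Matrix.smul_mulVec, Matrix.one_mulVec, sub_self]
  have hdetT : ((B - μ • 1)ᵀ).det = 0 := by rw [Matrix.det_transpose]; exact hdet
  obtain ⟨w, hw0, hw⟩ := Matrix.exists_mulVec_eq_zero_iff.mpr hdetT
  refine ⟨w, hw0, ?_⟩
  have h2 : (Bᵀ - μ • 1).mulVec w = 0 := by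
    have hsm : (μ • (1 : Matrix k k ℂ))ᵀ = μ • 1 := by
      rw [Matrix.transpose_smul, Matrix.transpose_one]
    rwa [Matrix.transpose_sub, hsm] at hw
  have h3 : Bᵀ.mulVec w = μ • w := by
    rw [Matrix.sub_mulVec, sub_eq_zero] at h2
    rw [h2, Matrix.smul_mulVec, Matrix.one_mulVec]
  rw [← Matrix.mulVec_transpose]
  exact h3

end Eig

theorem stmt14 {n : ℕ} (τ : ℝ) (hτ : 0 < τ) (W : Matrix (Fin n) (Fin n) ℝ)
    (m : Fin n → ℝ≥0∞) (hm : ∀ i, 1 < m i)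
    (hinv : ∀ σ : Fin n → ℝ, (∀ i, σ i = 0 ∨ σ i = 1) →
      (1 - Matrix.diagonal σ * W).det ≠ 0)
    (hstab : ∀ d : Fin n → ℝ, ∃ xs : Fin n → ℝ,
      xs = clamp m (W.mulVec xs + d) ∧
      (∀ y : Fin n → ℝ, y = clamp m (W.mulVec y + d) → y = xs) ∧
      (∀ ε > (0 : ℝ), ∃ δ > (0 : ℝ), ∀ x : ℝ → (Fin n → ℝ),
        (∀ t, 0 ≤ t → HasDerivAt x (τ⁻¹ • (-(x t) + clamp m (W.mulVec (x t) + d))) t) →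
        ‖x 0 - xs‖ < δ → ∀ t, 0 ≤ t → ‖x t - xs‖ < ε) ∧
      (∃ δ₀ > (0 : ℝ), ∀ x : ℝ → (Fin n → ℝ),
        (∀ t, 0 ≤ t → HasDerivAt x (τ⁻¹ • (-(x t) + clamp m (W.mulVec (x t) + d))) t) →
        ‖x 0 - xs‖ < δ₀ → Filter.Tendsto x Filter.atTop (nhds xs))) :
    TotallyHurwitz (-1 + W) ∧
    (∀ σ : Fin n → ℝ, (∀ i, σ i = 0 ∨ σ i = 1) →
      let d := ((2 : ℝ) • (1 : Matrix (Fin n) (Fin n) ℝ) - W).mulVec σ - 1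
      σ = clamp m (W.mulVec σ + d) ∧
      ∀ i, (σ i = 1 → 0 < (W.mulVec σ + d) i ∧ ENNReal.ofReal ((W.mulVec σ + d) i) < m i) ∧
           (σ i = 0 → (W.mulVec σ + d) i < 0)) := by
  classical
  constructor
  · -- Totally Hurwitz
    intro S μ hμeig
    by_contra hltc
    have hre : 0 ≤ μ.re := not_lt.mp hltc
    obtain ⟨w, hw0, hweq⟩ := left_eig
      (((-1 + W).submatrix (fun i : {x // x ∈ S} => (i : Fin n))
        (fun i : {x // x ∈ S} => (i : Fin n))).map (fun x : ℝ => (x : ℂ))) μ hμeig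
    set σ' : Fin n → ℝ := fun i => if i ∈ S then 1 else 0 with hσ'def
    have hσ' : ∀ i, σ' i = 0 ∨ σ' i = 1 := by
      intro i; by_cases h : i ∈ S <;> simp [hσ'def, h]
    have hσ'S : ∀ i ∈ S, σ' i = 1 := by intro i hi; simp [hσ'def, hi]
    have hσ'n : ∀ i, i ∉ S → σ' i = 0 := by intro i hi; simp [hσ'def, hi]
    have hμ1 : μ + 1 ≠ 0 := by
      intro h
      have h2 : (μ + 1).re = 0 := by rw [h]; simp
      simp only [Complex.add_re, Complex.one_re] at h2
      linarith
    set uh : Fin n → ℂ := fun i => if hi : i ∈ S then w ⟨i, hi⟩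
      else (μ + 1)⁻¹ * (∑ a : {x // x ∈ S}, w a * ((W (a : Fin n) i : ℝ) : ℂ)) with huhdef
    have huhS : ∀ (i : Fin n) (hi : i ∈ S), uh i = w ⟨i, hi⟩ := by
      intro i hi; simp [huhdef, hi]
    have huhn : ∀ (i : Fin n), i ∉ S →
        uh i = (μ + 1)⁻¹ * (∑ a : {x // x ∈ S}, w a * ((W (a : Fin n) i : ℝ) : ℂ)) := by
      intro i hi; simp [huhdef, hi]
    have huh0 : uh ≠ 0 := by
      obtain ⟨a, ha⟩ : ∃ a, w a ≠ 0 := by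
        by_contra hcon; push_neg at hcon; exact hw0 (funext hcon)
      intro h
      apply ha
      have h2 := congrFun h (a : Fin n)
      rwa [huhS (a : Fin n) a.2, Subtype.coe_eta, Pi.zero_apply] at h2
    have hM : ∀ i k, (-1 + Matrix.diagonal σ' * W) i k
        = (if i = k then (-1:ℝ) else 0) + σ' i * W i k := by
      intro i k
      by_cases h : i = k <;>
        simp [Matrix.add_apply, Matrix.neg_apply, Matrix.one_apply, Matrix.diagonal_mul, h]
    have hC : ∀ i k, (-1 + W) i k = (if i = k then (-1:ℝ) else 0) + W i k := by
      intro i k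
      by_cases h : i = k <;>
        simp [Matrix.add_apply, Matrix.neg_apply, Matrix.one_apply, h]
    have hkey : Matrix.vecMul uh ((-1 + Matrix.diagonal σ' * W).map (fun x : ℝ => (x : ℂ)))
        = μ • uh := by
      funext jj
      have hvm : Matrix.vecMul uh ((-1 + Matrix.diagonal σ' * W).map (fun x : ℝ => (x : ℂ))) jj
          = ∑ i, uh i * (((-1 + Matrix.diagonal σ' * W) i jj : ℝ) : ℂ) := rfl
      rw [hvm, ← Finset.sum_add_sum_compl S]
      have hsmul : (μ • uh) jj = μ * uh jj := rfl
      by_cases hjS : jj ∈ S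
      · have hc0 : ∑ i ∈ Sᶜ, uh i * (((-1 + Matrix.diagonal σ' * W) i jj : ℝ) : ℂ) = 0 := by
          refine Finset.sum_eq_zero fun i hi => ?_
          rw [Finset.mem_compl] at hi
          have hine : i ≠ jj := fun hcc => hi (hcc ▸ hjS)
          rw [hM i jj, if_neg hine, hσ'n i hi]
          simp
        have hSsum : ∑ i ∈ S, uh i * (((-1 + Matrix.diagonal σ' * W) i jj : ℝ) : ℂ)
            = ∑ a : {x // x ∈ S}, w a *
              ((((-1 + W).submatrix (fun i : {x // x ∈ S} => (i : Fin n))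
                (fun i : {x // x ∈ S} => (i : Fin n))).map (fun x : ℝ => (x : ℂ))) a ⟨jj, hjS⟩) := by
          rw [← Finset.sum_coe_sort S]
          refine Finset.sum_congr rfl fun a _ => ?_
          rw [huhS (a : Fin n) a.2, Subtype.coe_eta]
          congr 1
          rw [Matrix.map_apply, Matrix.submatrix_apply, hM, hC, hσ'S (a : Fin n) a.2]
          by_cases h : (a : Fin n) = jj
          · have h2 : a = (⟨jj, hjS⟩ : {x // x ∈ S}) := Subtype.ext h
            simp [h, h2]
          · have h2 : a ≠ (⟨jj, hjS⟩ : {x // x ∈ S}) := fun hcc => h (congrArg Subtype.val hcc)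
            simp [h, h2]
        rw [hc0, add_zero, hSsum, hsmul, huhS jj hjS]
        have h3 := congrFun hweq ⟨jj, hjS⟩
        have h4 : Matrix.vecMul w (((-1 + W).submatrix (fun i : {x // x ∈ S} => (i : Fin n))
            (fun i : {x // x ∈ S} => (i : Fin n))).map (fun x : ℝ => (x : ℂ))) ⟨jj, hjS⟩
            = ∑ a : {x // x ∈ S}, w a *
              ((((-1 + W).submatrix (fun i : {x // x ∈ S} => (i : Fin n))
                (fun i : {x // x ∈ S} => (i : Fin n))).map (fun x : ℝ => (x : ℂ))) a ⟨jj, hjS⟩) := rfl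
        rw [h4] at h3
        rw [h3]
        rfl
      · have hc1 : ∑ i ∈ S, uh i * (((-1 + Matrix.diagonal σ' * W) i jj : ℝ) : ℂ)
            = ∑ a : {x // x ∈ S}, w a * ((W (a : Fin n) jj : ℝ) : ℂ) := by
          rw [← Finset.sum_coe_sort S]
          refine Finset.sum_congr rfl fun a _ => ?_
          rw [huhS (a : Fin n) a.2, Subtype.coe_eta]
          congr 1
          have hane : (a : Fin n) ≠ jj := fun hcc => hjS (hcc ▸ a.2)
          rw [hM, if_neg hane, hσ'S (a : Fin n) a.2]
          norm_num
        have hc2 : ∑ i ∈ Sᶜ, uh i * (((-1 + Matrix.diagonal σ' * W) i jj : ℝ) : ℂ)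
            = uh jj * (-1) := by
          refine Finset.sum_eq_single_of_mem jj (Finset.mem_compl.mpr hjS) ?_ |>.trans ?_
          · intro b hb hbne
            rw [Finset.mem_compl] at hb
            rw [hM, if_neg hbne, hσ'n b hb]
            simp
          · rw [hM, if_pos rfl, hσ'n jj hjS]
            norm_num
        rw [hc1, hc2, hsmul, huhn jj hjS]
        field_simp
        ring
    exact key_hurwitz τ hτ W m hm σ' hσ' (hstab _) μ uh huh0 hkey hre
  · -- fixed point part
    intro σ hσ
    refine ⟨fixed_pt W m hm σ hσ, ?_⟩
    intro i
    constructor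
    · intro h1
      constructor
      · rw [val_eq, h1]; norm_num
      · rw [val_eq, h1, show (2 * (1:ℝ) - 1) = 1 by norm_num, ENNReal.ofReal_one]
        exact hm i
    · intro h0
      rw [val_eq, h0]; norm_num
end

section
/- Consider τẋ = −x + [Wx + d(t)]₀^∞ with nonnegative initial condition x(0) = x₀ ≥ 0, and the excitatory-only comparison system τẏ = −y + [[W]₀^∞ y + d(t)]₀^∞ with y(0) = x₀, where [W]₀^∞ is the entrywise positive part of W. Then x(t) ≤ y(t) componentwise for all t ≥ 0. -/
open Matrix
open scoped ENNReal

open Set Filter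
open scoped Topology


lemma contOn_sup'' {ι : Type*} (s : Finset ι) (hs : s.Nonempty) (g : ι → ℝ → ℝ) (S : Set ℝ)
    (h : ∀ i ∈ s, ContinuousOn (g i) S) :
    ContinuousOn (fun t => s.sup' hs (fun i => g i t)) S := by
  induction hs using Finset.Nonempty.cons_induction with
  | singleton i =>
      exact h i (by simp)
  | cons i s hi hs ih =>
      have h2 : ContinuousOn (fun t => g i t ⊔ s.sup' hs (fun j => g j t)) S :=
        (h i (by simp)).sup' (ih fun j hj => h j (Finset.mem_cons_of_mem hj))
      convert h2 using 2 with t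
      exact Finset.sup'_cons hs ..

lemma max_sub_max_le (a b : ℝ) : max a 0 - max b 0 ≤ max (a - b) 0 := by
  simp only [max_def]; split_ifs <;> linarith

lemma max_gronwall {ι : Type*} [Fintype ι] [Nonempty ι]
    (g g' : ι → ℝ → ℝ) (b K : ℝ) (hK : 0 ≤ K)
    (hg : ∀ i, ∀ t ∈ Set.Icc (0:ℝ) b, HasDerivAt (g i) (g' i t) t)
    (i0 : ι) (hzero : ∀ t, g i0 t = 0)
    (hinit : ∀ i, g i 0 ≤ 0)
    (hbound : ∀ t ∈ Set.Ico (0:ℝ) b, ∀ i, (∀ j, g j t ≤ g i t) → g' i t ≤ K * g i t) :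
    ∀ t ∈ Set.Icc (0:ℝ) b, ∀ i, g i t ≤ 0 := by
  set F : ℝ → ℝ := fun t => Finset.univ.sup' Finset.univ_nonempty (fun i => g i t) with hF
  have hFle : ∀ t i, g i t ≤ F t := fun t i => by simp only [hF]; exact Finset.le_sup' (fun j => g j t) (Finset.mem_univ i)
  have hF0 : ∀ t, 0 ≤ F t := fun t => (hzero t) ▸ hFle t i0
  have key : ∀ t ∈ Set.Icc (0:ℝ) b, F t ≤ gronwallBound 0 K 0 (t - 0) := by
    apply le_gronwallBound_of_liminf_deriv_right_le (f' := fun t => K * F t)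
    · exact contOn_sup'' _ _ _ _ fun i _ => fun t ht => (hg i t ht).continuousAt.continuousWithinAt
    · intro t ht r hr
      have hrpos : (0:ℝ) < r := lt_of_le_of_lt (mul_nonneg hK (hF0 t)) hr
      have hev : ∀ᶠ z in 𝓝[>] t, ∀ i, (z - t)⁻¹ * (g i z - F t) < r := by
        rw [eventually_all]
        intro i
        rcases eq_or_lt_of_le (hFle t i) with hmax | hlt
        · have hd : g' i t < r := lt_of_le_of_lt
            (by rw [← hmax] at hr ⊢; exact hbound t ht i (fun j => hmax ▸ hFle t j)) hr
          have hsl : Tendsto (slope (g i) t) (𝓝[>] t) (𝓝 (g' i t)) :=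
            (hasDerivAt_iff_tendsto_slope.1 (hg i t (Set.mem_Icc_of_Ico ht))).mono_left
              (nhdsWithin_mono t (fun z hz => ne_of_gt hz))
          filter_upwards [hsl.eventually_lt_const hd, self_mem_nhdsWithin] with z hz hz'
          have hslope : slope (g i) t z = (z - t)⁻¹ * (g i z - g i t) := by
            rw [slope_def_field]; field_simp
          rw [← hmax, ← hslope]
          exact hz
        · have hc : Tendsto (g i) (𝓝[>] t) (𝓝 (g i t)) :=
            ((hg i t (Set.mem_Icc_of_Ico ht)).continuousAt.tendsto).mono_left nhdsWithin_le_nhds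
          filter_upwards [hc.eventually_lt_const hlt, self_mem_nhdsWithin] with z hz hz'
          have h1 : (0:ℝ) < (z - t)⁻¹ := inv_pos.2 (sub_pos.2 hz')
          nlinarith
      refine (hev.mono ?_).frequently
      intro z hz
      obtain ⟨j, -, hj⟩ := Finset.exists_mem_eq_sup' Finset.univ_nonempty (fun i => g i z)
      have hFz : F z = g j z := by simp only [hF]; exact hj
      rw [hFz]
      exact hz j
    · exact Finset.sup'_le _ _ fun i _ => hinit i
    · exact fun t ht => le_of_eq (add_zero _).symm
  intro t ht i
  have := key t ht
  rw [gronwallBound_ε0_δ0] at this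
  exact (hFle t i).trans this


theorem stmt15 {n : ℕ} (τ : ℝ) (hτ : 0 < τ) (W : Matrix (Fin n) (Fin n) ℝ)
    (d : ℝ → Fin n → ℝ) (x y : ℝ → Fin n → ℝ)
    (hx0 : ∀ i, 0 ≤ x 0 i) (hy0 : y 0 = x 0)
    (hx : ∀ t, 0 ≤ t → HasDerivAt x (τ⁻¹ • (-(x t) + posv (W.mulVec (x t) + d t))) t)
    (hy : ∀ t, 0 ≤ t →
      HasDerivAt y (τ⁻¹ • (-(y t) + posv ((W.map (fun a => max a 0)).mulVec (y t) + d t))) t) :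
    ∀ t, 0 ≤ t → ∀ i, x t i ≤ y t i := by
  have hτi : (0:ℝ) < τ⁻¹ := inv_pos.2 hτ
  -- componentwise derivatives
  have hxc : ∀ i, ∀ t, 0 ≤ t → HasDerivAt (fun s => x s i)
      (τ⁻¹ * (-(x t i) + max (W.mulVec (x t) i + d t i) 0)) t := by
    intro i t ht
    have := hasDerivAt_pi.1 (hx t ht) i
    simpa [posv, Pi.smul_apply, smul_eq_mul] using this
  have hyc : ∀ i, ∀ t, 0 ≤ t → HasDerivAt (fun s => y s i)
      (τ⁻¹ * (-(y t i) + max ((W.map (fun a => max a 0)).mulVec (y t) i + d t i) 0)) t := by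
    intro i t ht
    have := hasDerivAt_pi.1 (hy t ht) i
    simpa [posv, Pi.smul_apply, smul_eq_mul] using this
  -- Step 1 : x stays nonnegative
  have hxnn : ∀ t, 0 ≤ t → ∀ i, 0 ≤ x t i := by
    intro T hT i
    have key := max_gronwall (ι := Option (Fin n))
      (g := fun o t => o.elim 0 (fun i => -(x t i)))
      (g' := fun o t => o.elim 0
        (fun i => -(τ⁻¹ * (-(x t i) + max (W.mulVec (x t) i + d t i) 0))))
      T 0 le_rfl ?_ none (fun _ => rfl) ?_ ?_ T ⟨hT, le_rfl⟩ (some i)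
    · simpa using key
    · rintro (_ | i) t ht
      · exact hasDerivAt_const t 0
      · exact ((hxc i t ht.1).neg)
    · rintro (_ | i)
      · exact le_rfl
      · simpa using hx0 i
    · rintro t ht (_ | i) hmax
      · simp
      · have h0 : (0:ℝ) ≤ -(x t i) := hmax none
        have hM : (0:ℝ) ≤ max (W.mulVec (x t) i + d t i) 0 := le_max_right _ _
        simp only [Option.elim, zero_mul]
        nlinarith
  -- Step 2 : comparison
  intro T hT i
  set C : ℝ := ∑ k, ∑ j, max (W k j) 0 with hC
  have hCnn : 0 ≤ C := Finset.sum_nonneg fun k _ =>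
    Finset.sum_nonneg fun j _ => le_max_right _ _
  have hK : 0 ≤ τ⁻¹ * C := mul_nonneg hτi.le hCnn
  have key := max_gronwall (ι := Option (Fin n))
    (g := fun o t => o.elim 0 (fun i => x t i - y t i))
    (g' := fun o t => o.elim 0
      (fun i => τ⁻¹ * (-(x t i) + max (W.mulVec (x t) i + d t i) 0)
        - τ⁻¹ * (-(y t i) + max ((W.map (fun a => max a 0)).mulVec (y t) i + d t i) 0)))
    T (τ⁻¹ * C) hK ?_ none (fun _ => rfl) ?_ ?_ T ⟨hT, le_rfl⟩ (some i)
  · simpa [sub_nonpos] using key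
  · rintro (_ | i) t ht
    · exact hasDerivAt_const t 0
    · exact (hxc i t ht.1).sub (hyc i t ht.1)
  · rintro (_ | i)
    · exact le_rfl
    · simp [hy0]
  · rintro t ht (_ | i) hmax
    · simp [mul_nonneg hK]
    · set M : ℝ := x t i - y t i with hM
      have hM0 : (0:ℝ) ≤ M := hmax none
      have hMj : ∀ j, x t j - y t j ≤ M := fun j => hmax (some j)
      -- bound on the difference of the inputs
      have hAB : W.mulVec (x t) i - (W.map (fun a => max a 0)).mulVec (y t) i ≤ C * M := by
        have hterm : ∀ j, W i j * x t j - max (W i j) 0 * y t j ≤ max (W i j) 0 * M := by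
          intro j
          have h1 : W i j * x t j ≤ max (W i j) 0 * x t j :=
            mul_le_mul_of_nonneg_right (le_max_left _ _) (hxnn t ht.1 j)
          have h2 : max (W i j) 0 * (x t j - y t j) ≤ max (W i j) 0 * M :=
            mul_le_mul_of_nonneg_left (hMj j) (le_max_right _ _)
          nlinarith
        calc W.mulVec (x t) i - (W.map (fun a => max a 0)).mulVec (y t) i
            = ∑ j, (W i j * x t j - max (W i j) 0 * y t j) := by
              simp [Matrix.mulVec, dotProduct, Matrix.map_apply, Finset.sum_sub_distrib]
          _ ≤ ∑ j, max (W i j) 0 * M := Finset.sum_le_sum fun j _ => hterm j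
          _ = (∑ j, max (W i j) 0) * M := by rw [Finset.sum_mul]
          _ ≤ C * M := by
              refine mul_le_mul_of_nonneg_right ?_ hM0
              exact Finset.single_le_sum (f := fun k => ∑ j, max (W k j) 0)
                (fun k _ => Finset.sum_nonneg fun j _ => le_max_right _ _) (Finset.mem_univ i)
      have hmaxdiff : max (W.mulVec (x t) i + d t i) 0
          - max ((W.map (fun a => max a 0)).mulVec (y t) i + d t i) 0 ≤ C * M := by
        have := max_sub_max_le (W.mulVec (x t) i + d t i)
          ((W.map (fun a => max a 0)).mulVec (y t) i + d t i)
        have h2 : max (W.mulVec (x t) i + d t i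
            - ((W.map (fun a => max a 0)).mulVec (y t) i + d t i)) 0 ≤ C * M := by
          refine max_le ?_ (mul_nonneg hCnn hM0)
          have : W.mulVec (x t) i + d t i
              - ((W.map (fun a => max a 0)).mulVec (y t) i + d t i)
              = W.mulVec (x t) i - (W.map (fun a => max a 0)).mulVec (y t) i := by ring
          rw [this]; exact hAB
        linarith
      simp only [Option.elim]
      nlinarith
end
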